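/- arXiv:2504.21781 — 6 statements merged into one kernel-verified Lean document; each statement's English description precedes it below -/
import Mathlib

section
/- Let G be a connected finite simple graph on n ≥ 2 vertices, let 1 ≤ ℓ ≤ n, and let s_1, …, s_ℓ ∈ V(G) be (not necessarily distinct) source vertices. Let D_1, …, D_ℓ be independent random variables, each uniformly distributed on {1, …, ℓ}. Then for every constant c > 0 there is a constant C > 0 (depending only on c) such that with probability at least 1 − n^{−c} the following holds: for every vertex v ∈ V(G) and every integer r, the number of indices j ∈ {1, …, ℓ} with D_j + dist_G(s_j, v) = r is at most C·log n. -/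
open Finset

private lemma two_pow_le_factorial_succ : ∀ k : ℕ, 2 ^ k ≤ (k + 1).factorial
  | 0 => le_refl 1
  | k + 1 => by
      rw [pow_succ, Nat.factorial_succ]
      calc 2 ^ k * 2 ≤ (k + 1).factorial * 2 :=
            Nat.mul_le_mul_right _ (two_pow_le_factorial_succ k)
        _ ≤ (k + 1 + 1) * (k + 1).factorial := by
            rw [mul_comm]; exact Nat.mul_le_mul_right _ (by omega)

private lemma dist_lt_card' {V : Type} [Fintype V] {G : SimpleGraph V} (h : G.Connected)
    (u v : V) : G.dist u v < Fintype.card V := by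
  classical
  obtain ⟨p⟩ := h.preconnected u v
  exact lt_of_le_of_lt (SimpleGraph.dist_le p.bypass) p.bypass_isPath.length_lt

private lemma count_filter_bound {ℓ : ℕ} (P : Fin ℓ → Fin ℓ → Prop) [∀ j d, Decidable (P j d)]
    (hP : ∀ j, (Finset.univ.filter (P j)).card ≤ 1) (k : ℕ) :
    (Finset.univ.filter fun D : Fin ℓ → Fin ℓ =>
        k ≤ (Finset.univ.filter fun j => P j (D j)).card).card
      ≤ ℓ.choose k * ℓ ^ (ℓ - k) := by
  classical
  have hsub : (Finset.univ.filter fun D : Fin ℓ → Fin ℓ =>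
      k ≤ (Finset.univ.filter fun j => P j (D j)).card) ⊆
      (Finset.powersetCard k Finset.univ).biUnion
        (fun S => Finset.univ.filter fun D : Fin ℓ → Fin ℓ => ∀ j ∈ S, P j (D j)) := by
    intro D hD
    simp only [Finset.mem_filter, Finset.mem_univ, true_and] at hD
    obtain ⟨S, hSsub, hScard⟩ := Finset.exists_subset_card_eq hD
    refine Finset.mem_biUnion.2 ⟨S, Finset.mem_powersetCard.2 ⟨Finset.subset_univ _, hScard⟩, ?_⟩
    simp only [Finset.mem_filter, Finset.mem_univ, true_and]
    intro j hj
    have := hSsub hj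
    simp only [Finset.mem_filter] at this
    exact this.2
  refine le_trans (Finset.card_le_card hsub) (le_trans Finset.card_biUnion_le ?_)
  have hbound : ∀ S ∈ Finset.powersetCard k (Finset.univ : Finset (Fin ℓ)),
      (Finset.univ.filter fun D : Fin ℓ → Fin ℓ => ∀ j ∈ S, P j (D j)).card ≤ ℓ ^ (ℓ - k) := by
    intro S hS
    have hScard : S.card = k := (Finset.mem_powersetCard.1 hS).2
    have heq : (Finset.univ.filter fun D : Fin ℓ → Fin ℓ => ∀ j ∈ S, P j (D j)) =
        Fintype.piFinset (fun j => if j ∈ S then Finset.univ.filter (P j) else Finset.univ) := by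
      ext D
      simp only [Finset.mem_filter, Finset.mem_univ, true_and, Fintype.mem_piFinset]
      constructor
      · intro h j
        by_cases hj : j ∈ S
        · simpa [hj] using h j hj
        · simp [hj]
      · intro h j hj
        have := h j
        simpa [hj] using this
    rw [heq, Fintype.card_piFinset]
    calc ∏ j, (if j ∈ S then Finset.univ.filter (P j) else Finset.univ).card
        ≤ ∏ j : Fin ℓ, (if j ∈ S then 1 else ℓ) := by
          apply Finset.prod_le_prod'
          intro j _
          by_cases hj : j ∈ S
          · simpa [hj] using hP j
          · simp [hj]
      _ = ℓ ^ (ℓ - k) := by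
          rw [← Finset.prod_sdiff (Finset.subset_univ S)]
          have h1 : ∏ j ∈ S, (if j ∈ S then 1 else ℓ) = 1 :=
            Finset.prod_eq_one (fun j hj => if_pos hj)
          have h2 : ∏ j ∈ ((Finset.univ : Finset (Fin ℓ)) \ S), (if j ∈ S then 1 else ℓ)
              = ℓ ^ (ℓ - k) := by
            rw [Finset.prod_congr rfl (fun j hj => if_neg (Finset.mem_sdiff.1 hj).2),
              Finset.prod_const, Finset.card_sdiff_of_subset (Finset.subset_univ S), Finset.card_univ,
              Fintype.card_fin, hScard]
          rw [h1, h2, mul_one]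
  calc ∑ S ∈ Finset.powersetCard k (Finset.univ : Finset (Fin ℓ)),
        (Finset.univ.filter fun D : Fin ℓ → Fin ℓ => ∀ j ∈ S, P j (D j)).card
      ≤ ∑ _S ∈ Finset.powersetCard k (Finset.univ : Finset (Fin ℓ)), ℓ ^ (ℓ - k) :=
        Finset.sum_le_sum hbound
    _ = ℓ.choose k * ℓ ^ (ℓ - k) := by
        rw [Finset.sum_const, Finset.card_powersetCard, Finset.card_univ, Fintype.card_fin,
          smul_eq_mul]

/-- **Random-delay BFS scheduling, broadcast congestion.** For every `c > 0` there is `C > 0`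
(depending only on `c`) such that for any connected graph `G` on `n ≥ 2` vertices, any
`1 ≤ ℓ ≤ n` and sources `s 0, …, s (ℓ-1)`, if the delays `D j` are independent and uniform on
`{1, …, ℓ}` (modelled by the uniform distribution on functions `D : Fin ℓ → Fin ℓ`, with the
delay being `D j + 1`), then with probability at least `1 - n^{-c}`: for every vertex `v` and
every round `r`, at most `C · log n` indices `j` satisfy `D j + dist (s j) v = r`. -/
theorem bfs_random_delay_broadcast_congestion :
    ∀ c : ℝ, 0 < c → ∃ C : ℝ, 0 < C ∧
      ∀ (V : Type) [Fintype V] (G : SimpleGraph V), G.Connected →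
        2 ≤ Fintype.card V →
        ∀ ℓ : ℕ, 1 ≤ ℓ → ℓ ≤ Fintype.card V →
        ∀ s : Fin ℓ → V,
          (1 - (Fintype.card V : ℝ) ^ (-c)) * (ℓ : ℝ) ^ ℓ ≤
            (({D : Fin ℓ → Fin ℓ |
                ∀ (v : V) (r : ℕ),
                  (({j : Fin ℓ | ((D j : ℕ) + 1) + G.dist (s j) v = r}.ncard : ℝ)) ≤
                    C * Real.log (Fintype.card V)}.ncard : ℝ)) := by
  intro c hc
  have hlog2 : (0:ℝ) < Real.log 2 := Real.log_pos one_lt_two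
  refine ⟨(c + 4) / Real.log 2, div_pos (by linarith) hlog2, ?_⟩
  intro V _ G hconn hn2 ℓ hℓ1 hℓn s
  classical
  set C : ℝ := (c + 4) / Real.log 2 with hCdef
  set n : ℕ := Fintype.card V with hndef
  have hn1R : (1:ℝ) ≤ (n:ℝ) := by exact_mod_cast Nat.one_le_of_lt hn2
  have hn2R : (2:ℝ) ≤ (n:ℝ) := by exact_mod_cast hn2
  have hnposR : (0:ℝ) < (n:ℝ) := by linarith
  have hlogn : (0:ℝ) ≤ Real.log n := Real.log_nonneg hn1R
  have hCpos : (0:ℝ) < C := div_pos (by linarith) hlog2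
  have hClogn : (0:ℝ) ≤ C * Real.log n := mul_nonneg hCpos.le hlogn
  set k : ℕ := ⌊C * Real.log n⌋₊ + 1 with hkdef
  -- convert inner ncard to Finset card
  have hcover : (Finset.univ.filter fun D : Fin ℓ → Fin ℓ =>
        ¬ ∀ (v : V) (r : ℕ),
          ((Finset.univ.filter fun j : Fin ℓ =>
              ((D j : ℕ) + 1) + G.dist (s j) v = r).card : ℝ) ≤ C * Real.log n) ⊆
      Finset.univ.biUnion (fun v : V => (Finset.range (2*n)).biUnion (fun r =>
        Finset.univ.filter fun D : Fin ℓ → Fin ℓ =>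
          k ≤ (Finset.univ.filter fun j : Fin ℓ =>
              ((D j : ℕ) + 1) + G.dist (s j) v = r).card)) := by
    intro D hD
    simp only [Finset.mem_filter, Finset.mem_univ, true_and] at hD
    push_neg at hD
    obtain ⟨v, r, hvr⟩ := hD
    have hkcard : k ≤ (Finset.univ.filter fun j : Fin ℓ =>
        ((D j : ℕ) + 1) + G.dist (s j) v = r).card := by
      have : ⌊C * Real.log n⌋₊ < (Finset.univ.filter fun j : Fin ℓ =>
          ((D j : ℕ) + 1) + G.dist (s j) v = r).card := (Nat.floor_lt hClogn).2 (by exact_mod_cast hvr)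
      omega
    have hpos : 0 < (Finset.univ.filter fun j : Fin ℓ =>
        ((D j : ℕ) + 1) + G.dist (s j) v = r).card := by omega
    obtain ⟨j, hj⟩ := Finset.card_pos.1 hpos
    simp only [Finset.mem_filter, Finset.mem_univ, true_and] at hj
    have hdist : G.dist (s j) v < n := dist_lt_card' hconn _ _
    have hDj : (D j : ℕ) < ℓ := (D j).isLt
    have hr : r < 2 * n := by omega
    exact Finset.mem_biUnion.2 ⟨v, Finset.mem_univ _, Finset.mem_biUnion.2
      ⟨r, Finset.mem_range.2 hr, Finset.mem_filter.2 ⟨Finset.mem_univ _, hkcard⟩⟩⟩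
  -- cardinality bound on the bad set
  have hone : ∀ (v : V) (r : ℕ) (j : Fin ℓ),
      (Finset.univ.filter fun d : Fin ℓ => ((d : ℕ) + 1) + G.dist (s j) v = r).card ≤ 1 := by
    intro v r j
    refine Finset.card_le_one.2 ?_
    intro a ha b hb
    simp only [Finset.mem_filter, Finset.mem_univ, true_and] at ha hb
    exact Fin.ext (by omega)
  have hbadcard : (Finset.univ.filter fun D : Fin ℓ → Fin ℓ =>
        ¬ ∀ (v : V) (r : ℕ),
          ((Finset.univ.filter fun j : Fin ℓ =>
              ((D j : ℕ) + 1) + G.dist (s j) v = r).card : ℝ) ≤ C * Real.log n).card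
      ≤ n * (2 * n * (ℓ.choose k * ℓ ^ (ℓ - k))) := by
    refine le_trans (Finset.card_le_card hcover) (le_trans Finset.card_biUnion_le ?_)
    calc ∑ v : V, ((Finset.range (2*n)).biUnion (fun r =>
            Finset.univ.filter fun D : Fin ℓ → Fin ℓ =>
              k ≤ (Finset.univ.filter fun j : Fin ℓ =>
                  ((D j : ℕ) + 1) + G.dist (s j) v = r).card)).card
        ≤ ∑ _v : V, 2 * n * (ℓ.choose k * ℓ ^ (ℓ - k)) := by
          refine Finset.sum_le_sum fun v _ => le_trans Finset.card_biUnion_le ?_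
          calc ∑ r ∈ Finset.range (2*n),
                (Finset.univ.filter fun D : Fin ℓ → Fin ℓ =>
                  k ≤ (Finset.univ.filter fun j : Fin ℓ =>
                      ((D j : ℕ) + 1) + G.dist (s j) v = r).card).card
              ≤ ∑ _r ∈ Finset.range (2*n), ℓ.choose k * ℓ ^ (ℓ - k) :=
                Finset.sum_le_sum fun r _ =>
                  count_filter_bound (fun j d => ((d : ℕ) + 1) + G.dist (s j) v = r)
                    (hone v r) k
            _ = 2 * n * (ℓ.choose k * ℓ ^ (ℓ - k)) := by
                rw [Finset.sum_const, Finset.card_range, smul_eq_mul]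
      _ = n * (2 * n * (ℓ.choose k * ℓ ^ (ℓ - k))) := by
          rw [Finset.sum_const, Finset.card_univ, smul_eq_mul]
  -- the real-number estimate on the bad set
  have hinner : ∀ (D : Fin ℓ → Fin ℓ) (v : V) (r : ℕ),
      ({j : Fin ℓ | ((D j : ℕ) + 1) + G.dist (s j) v = r}.ncard)
        = (Finset.univ.filter fun j : Fin ℓ => ((D j : ℕ) + 1) + G.dist (s j) v = r).card := by
    intro D v r
    rw [Set.ncard_eq_toFinset_card']
    congr 1
    ext j
    simp
  -- convert the goal's ncard to a Finset card
  have houter : ({D : Fin ℓ → Fin ℓ |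
      ∀ (v : V) (r : ℕ),
        (({j : Fin ℓ | ((D j : ℕ) + 1) + G.dist (s j) v = r}.ncard : ℝ)) ≤
          C * Real.log n}.ncard)
      = (Finset.univ.filter fun D : Fin ℓ → Fin ℓ =>
          ∀ (v : V) (r : ℕ),
            ((Finset.univ.filter fun j : Fin ℓ =>
                ((D j : ℕ) + 1) + G.dist (s j) v = r).card : ℝ) ≤ C * Real.log n).card := by
    rw [Set.ncard_eq_toFinset_card']
    congr 1
    ext D
    simp only [Set.mem_toFinset, Set.mem_setOf_eq, Finset.mem_filter, Finset.mem_univ, true_and]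
    constructor
    · intro h v r; rw [← hinner]; exact h v r
    · intro h v r; rw [hinner]; exact h v r
  rw [houter]
  -- split univ into good and bad
  have hsplit : (Finset.univ.filter fun D : Fin ℓ → Fin ℓ =>
          ∀ (v : V) (r : ℕ),
            ((Finset.univ.filter fun j : Fin ℓ =>
                ((D j : ℕ) + 1) + G.dist (s j) v = r).card : ℝ) ≤ C * Real.log n).card
      + (Finset.univ.filter fun D : Fin ℓ → Fin ℓ =>
          ¬ ∀ (v : V) (r : ℕ),
            ((Finset.univ.filter fun j : Fin ℓ =>
                ((D j : ℕ) + 1) + G.dist (s j) v = r).card : ℝ) ≤ C * Real.log n).card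
      = ℓ ^ ℓ := by
    rw [Finset.card_filter_add_card_filter_not, Finset.card_univ]
    simp [Fintype.card_fun]
  -- bad set is covered by per-(v,r) events
  have hbadR : ((Finset.univ.filter fun D : Fin ℓ → Fin ℓ =>
        ¬ ∀ (v : V) (r : ℕ),
          ((Finset.univ.filter fun j : Fin ℓ =>
              ((D j : ℕ) + 1) + G.dist (s j) v = r).card : ℝ) ≤ C * Real.log n).card : ℝ)
      ≤ (n : ℝ) ^ (-c) * (ℓ : ℝ) ^ ℓ := by
    have hcast : ((Finset.univ.filter fun D : Fin ℓ → Fin ℓ =>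
          ¬ ∀ (v : V) (r : ℕ),
            ((Finset.univ.filter fun j : Fin ℓ =>
                ((D j : ℕ) + 1) + G.dist (s j) v = r).card : ℝ) ≤ C * Real.log n).card : ℝ)
        ≤ (n : ℝ) * (2 * (n : ℝ) * ((ℓ.choose k : ℝ) * (ℓ : ℝ) ^ (ℓ - k))) := by
      exact_mod_cast hbadcard
    by_cases hkℓ : k ≤ ℓ
    · -- main case
      have hfact1 : (ℓ.choose k : ℝ) * (k.factorial : ℝ) ≤ (ℓ : ℝ) ^ k := by
        have : ℓ.choose k * k.factorial ≤ ℓ ^ k := by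
          rw [mul_comm, ← Nat.descFactorial_eq_factorial_mul_choose]
          exact Nat.descFactorial_le_pow ℓ k
        exact_mod_cast this
      have hfac2 : (2 : ℝ) ^ (⌊C * Real.log n⌋₊ : ℕ) ≤ (k.factorial : ℝ) := by
        exact_mod_cast two_pow_le_factorial_succ ⌊C * Real.log n⌋₊
      have hrpow1 : (n : ℝ) ^ ((c + 4 : ℝ)) / 2 ≤ (2 : ℝ) ^ (⌊C * Real.log n⌋₊ : ℕ) := by
        have hfl : C * Real.log n - 1 ≤ ((⌊C * Real.log n⌋₊ : ℕ) : ℝ) :=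
          (Nat.sub_one_lt_floor _).le
        have h1 : (2:ℝ) ^ (C * Real.log n - 1) ≤ (2:ℝ) ^ (((⌊C * Real.log n⌋₊ : ℕ) : ℝ)) :=
          Real.rpow_le_rpow_left_iff one_lt_two |>.2 hfl
        rw [Real.rpow_natCast] at h1
        refine le_trans (le_of_eq ?_) h1
        rw [Real.rpow_sub (by norm_num), Real.rpow_one]
        congr 1
        rw [Real.rpow_def_of_pos (by norm_num : (0:ℝ) < 2),
          Real.rpow_def_of_pos hnposR]
        congr 1
        rw [hCdef]
        field_simp
      have hfac3 : (n : ℝ) ^ ((c + 4 : ℝ)) / 2 ≤ (k.factorial : ℝ) := le_trans hrpow1 hfac2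
      have hfact2 : (2 : ℝ) * (n : ℝ) ^ (2:ℕ) ≤ (n : ℝ) ^ (-c) * (k.factorial : ℝ) := by
        have hsplitpow : (n : ℝ) ^ (-c) * ((n : ℝ) ^ ((c + 4 : ℝ)) / 2)
            = (n : ℝ) ^ ((4:ℝ)) / 2 := by
          rw [← mul_div_assoc, ← Real.rpow_add hnposR]
          norm_num
        have h4 : (n : ℝ) ^ ((4:ℝ)) = (n : ℝ) ^ (4:ℕ) := by
          rw [← Real.rpow_natCast (n:ℝ) 4]; norm_num
        have hrc : (0:ℝ) ≤ (n : ℝ) ^ (-c) := Real.rpow_nonneg hnposR.le _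
        have := mul_le_mul_of_nonneg_left hfac3 hrc
        rw [hsplitpow, h4] at this
        nlinarith [sq_nonneg ((n:ℝ) - 2), sq_nonneg (n:ℝ)]
      have hXnn : (0:ℝ) ≤ (ℓ.choose k : ℝ) * (ℓ : ℝ) ^ (ℓ - k) := by positivity
      have hFX : (k.factorial : ℝ) * ((ℓ.choose k : ℝ) * (ℓ : ℝ) ^ (ℓ - k)) ≤ (ℓ : ℝ) ^ ℓ := by
        have h1 : (k.factorial : ℝ) * ((ℓ.choose k : ℝ) * (ℓ : ℝ) ^ (ℓ - k))
            = ((ℓ.choose k : ℝ) * (k.factorial : ℝ)) * (ℓ : ℝ) ^ (ℓ - k) := by ring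
        rw [h1]
        calc ((ℓ.choose k : ℝ) * (k.factorial : ℝ)) * (ℓ : ℝ) ^ (ℓ - k)
            ≤ (ℓ : ℝ) ^ k * (ℓ : ℝ) ^ (ℓ - k) :=
              mul_le_mul_of_nonneg_right hfact1 (by positivity)
          _ = (ℓ : ℝ) ^ ℓ := by
              rw [← pow_add, Nat.add_sub_cancel' hkℓ]
      calc ((Finset.univ.filter fun D : Fin ℓ → Fin ℓ =>
            ¬ ∀ (v : V) (r : ℕ),
              ((Finset.univ.filter fun j : Fin ℓ =>
                  ((D j : ℕ) + 1) + G.dist (s j) v = r).card : ℝ) ≤ C * Real.log n).card : ℝ)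
          ≤ (n : ℝ) * (2 * (n : ℝ) * ((ℓ.choose k : ℝ) * (ℓ : ℝ) ^ (ℓ - k))) := hcast
        _ = (2 * (n : ℝ) ^ (2:ℕ)) * ((ℓ.choose k : ℝ) * (ℓ : ℝ) ^ (ℓ - k)) := by ring
        _ ≤ ((n : ℝ) ^ (-c) * (k.factorial : ℝ)) * ((ℓ.choose k : ℝ) * (ℓ : ℝ) ^ (ℓ - k)) :=
            mul_le_mul_of_nonneg_right hfact2 hXnn
        _ = (n : ℝ) ^ (-c) * ((k.factorial : ℝ) * ((ℓ.choose k : ℝ) * (ℓ : ℝ) ^ (ℓ - k))) := by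
            ring
        _ ≤ (n : ℝ) ^ (-c) * (ℓ : ℝ) ^ ℓ :=
            mul_le_mul_of_nonneg_left hFX (Real.rpow_nonneg hnposR.le _)
    · -- degenerate case: k > ℓ, the binomial coefficient vanishes
      have hch : ℓ.choose k = 0 := Nat.choose_eq_zero_of_lt (Nat.lt_of_not_le hkℓ)
      rw [hch] at hcast
      simp only [Nat.cast_zero, zero_mul, mul_zero] at hcast
      have : (0:ℝ) ≤ (n : ℝ) ^ (-c) * (ℓ : ℝ) ^ ℓ := by positivity
      linarith
  -- conclude
  have hcastsplit : ((Finset.univ.filter fun D : Fin ℓ → Fin ℓ =>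
          ∀ (v : V) (r : ℕ),
            ((Finset.univ.filter fun j : Fin ℓ =>
                ((D j : ℕ) + 1) + G.dist (s j) v = r).card : ℝ) ≤ C * Real.log n).card : ℝ)
      + ((Finset.univ.filter fun D : Fin ℓ → Fin ℓ =>
          ¬ ∀ (v : V) (r : ℕ),
            ((Finset.univ.filter fun j : Fin ℓ =>
                ((D j : ℕ) + 1) + G.dist (s j) v = r).card : ℝ) ≤ C * Real.log n).card : ℝ)
      = (ℓ : ℝ) ^ ℓ := by
    exact_mod_cast hsplit
  nlinarith [hbadR, hcastsplit]
end

section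
/- Let G be a connected finite simple graph on n ≥ 2 vertices, let 1 ≤ ℓ ≤ n, and let s_1, …, s_ℓ ∈ V(G) be (not necessarily distinct) source vertices. Let D_1, …, D_ℓ be independent random variables, each uniformly distributed on {1, …, ℓ}. Then for every constant c > 0 there is a constant C > 0 (depending only on c) such that with probability at least 1 − n^{−c} the following holds: for every vertex v ∈ V(G) and every integer r, the number of indices j ∈ {1, …, ℓ} for which there exists a vertex u in the closed neighborhood N_G[v] = {v} ∪ {neighbors of v} with D_j + dist_G(s_j, u) = r is at most C·log n. -/
open Finset

/-- `6^k ≤ 7776 * k!` for all `k` (note `7776 = 6^5`). -/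
private lemma six_pow_le_factorial (k : ℕ) : 6 ^ k ≤ 7776 * k.factorial := by
  induction k with
  | zero => norm_num
  | succ k ih =>
    rcases le_or_gt 5 k with h | h
    · calc 6 ^ (k + 1) = 6 * 6 ^ k := by ring
        _ ≤ 6 * (7776 * k.factorial) := Nat.mul_le_mul_left _ ih
        _ ≤ (k + 1) * (7776 * k.factorial) := Nat.mul_le_mul_right _ (by omega)
        _ = 7776 * (k + 1).factorial := by rw [Nat.factorial_succ]; ring
    · interval_cases k <;> decide

/-- Counting lemma: `2^k * (choose ℓ k * (3^k * ℓ^(ℓ-k))) ≤ 7776 * ℓ^ℓ`. -/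
private lemma key_count (ℓ k : ℕ) :
    2 ^ k * (Nat.choose ℓ k * (3 ^ k * ℓ ^ (ℓ - k))) ≤ 7776 * ℓ ^ ℓ := by
  rcases le_or_gt k ℓ with hkl | hkl
  · have h1 : Nat.choose ℓ k * k.factorial ≤ ℓ ^ k := by
      have := Nat.descFactorial_le_pow ℓ k
      rwa [Nat.descFactorial_eq_factorial_mul_choose, Nat.mul_comm] at this
    calc 2 ^ k * (Nat.choose ℓ k * (3 ^ k * ℓ ^ (ℓ - k)))
        = Nat.choose ℓ k * 6 ^ k * ℓ ^ (ℓ - k) := by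
          rw [show (6 : ℕ) ^ k = 2 ^ k * 3 ^ k by rw [← Nat.mul_pow]]; ring
      _ ≤ Nat.choose ℓ k * (7776 * k.factorial) * ℓ ^ (ℓ - k) := by
          exact Nat.mul_le_mul_right _ (Nat.mul_le_mul_left _ (six_pow_le_factorial k))
      _ = 7776 * (Nat.choose ℓ k * k.factorial) * ℓ ^ (ℓ - k) := by ring
      _ ≤ 7776 * ℓ ^ k * ℓ ^ (ℓ - k) := by
          exact Nat.mul_le_mul_right _ (Nat.mul_le_mul_left _ h1)
      _ = 7776 * ℓ ^ ℓ := by rw [Nat.mul_assoc, ← pow_add, Nat.add_sub_cancel' hkl]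
  · rw [Nat.choose_eq_zero_of_lt hkl]
    simp

private lemma ncard_setOf_eq {α : Type*} [Fintype α] (p : α → Prop) [DecidablePred p] :
    {x | p x}.ncard = (Finset.univ.filter p).card := by
  rw [Set.ncard_eq_toFinset_card', Set.toFinset_setOf]

/-- In a connected graph on a finite vertex set, distances are at most `card V - 1`. -/
private lemma dist_le_card_sub_one {V : Type} [Fintype V] {G : SimpleGraph V}
    (hG : G.Connected) (a b : V) : G.dist a b ≤ Fintype.card V - 1 := by
  classical
  obtain ⟨p⟩ := hG a b
  have h1 : G.dist a b ≤ p.bypass.length := SimpleGraph.dist_le _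
  have h2 : p.bypass.length < Fintype.card V :=
    (SimpleGraph.Walk.bypass_isPath p).length_lt
  omega

/-- **Random-delay BFS scheduling, receive congestion.** For every `c > 0` there is `C > 0`
(depending only on `c`) such that for any connected graph `G` on `n ≥ 2` vertices, any
`1 ≤ ℓ ≤ n` and sources `s 0, …, s (ℓ-1)`, if the delays `D j` are independent and uniform on
`{1, …, ℓ}` (modelled by the uniform distribution on functions `D : Fin ℓ → Fin ℓ`, with the
delay being `D j + 1`), then with probability at least `1 - n^{-c}`: for every vertex `v` and
every round `r`, at most `C · log n` indices `j` admit a vertex `u` in the closed neighborhood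
of `v` with `D j + dist (s j) u = r`. -/
theorem bfs_random_delay_receive_congestion :
    ∀ c : ℝ, 0 < c → ∃ C : ℝ, 0 < C ∧
      ∀ (V : Type) [Fintype V] (G : SimpleGraph V), G.Connected →
        2 ≤ Fintype.card V →
        ∀ ℓ : ℕ, 1 ≤ ℓ → ℓ ≤ Fintype.card V →
        ∀ s : Fin ℓ → V,
          (1 - (Fintype.card V : ℝ) ^ (-c)) * (ℓ : ℝ) ^ ℓ ≤
            (({D : Fin ℓ → Fin ℓ |
                ∀ (v : V) (r : ℕ),
                  (({j : Fin ℓ |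
                      ∃ u : V, (u = v ∨ G.Adj v u) ∧
                        ((D j : ℕ) + 1) + G.dist (s j) u = r}.ncard : ℝ)) ≤
                    C * Real.log (Fintype.card V)}.ncard : ℝ)) := by
  intro c hc
  refine ⟨2 * c + 32, by positivity, ?_⟩
  intro V _ G hG hn2 ℓ hl1 hln s
  classical
  set C : ℝ := 2 * c + 32 with hC
  set n : ℕ := Fintype.card V with hn
  have hn1R : (1 : ℝ) ≤ (n : ℝ) := by exact_mod_cast (by omega : 1 ≤ n)
  have hn2R : (2 : ℝ) ≤ (n : ℝ) := by exact_mod_cast hn2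
  have hn0R : (0 : ℝ) < (n : ℝ) := by linarith
  have hlogn : 0 ≤ Real.log n := Real.log_nonneg hn1R
  have hClog : 0 ≤ C * Real.log n := by positivity
  set k : ℕ := ⌊C * Real.log n⌋₊ + 1 with hk
  -- the "bad delays" finsets
  set B : V → ℕ → Fin ℓ → Finset (Fin ℓ) := fun v r j =>
    Finset.univ.filter (fun d : Fin ℓ =>
      ∃ u : V, (u = v ∨ G.Adj v u) ∧ ((d : ℕ) + 1) + G.dist (s j) u = r) with hB
  have hB3 : ∀ v r j, (B v r j).card ≤ 3 := by
    intro v r j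
    set t := G.dist (s j) v with ht
    have key : ∀ d ∈ B v r j,
        (d : ℕ) + 1 ≤ r ∧ r - 1 - (d : ℕ) ∈ Finset.Icc (t - 1) (t + 1) := by
      intro d hd
      rw [hB] at hd
      simp only [Finset.mem_filter, Finset.mem_univ, true_and] at hd
      obtain ⟨u, hu, he⟩ := hd
      have hadj : u = v ∨ G.dist v u = 1 := by
        rcases hu with h | h
        · exact Or.inl h
        · exact Or.inr (SimpleGraph.dist_eq_one_iff_adj.mpr h)
      have h1 : G.dist (s j) u ≤ t + 1 := by
        rcases hadj with h | h
        · subst h; omega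
        · have := hG.dist_triangle (u := s j) (v := v) (w := u)
          omega
      have h2 : t ≤ G.dist (s j) u + 1 := by
        rcases hadj with h | h
        · subst h; omega
        · have := hG.dist_triangle (u := s j) (v := u) (w := v)
          have hvu : G.dist u v = 1 := by
            rw [SimpleGraph.dist_comm] at h; exact h
          omega
      constructor
      · omega
      · rw [Finset.mem_Icc]; omega
    calc (B v r j).card ≤ (Finset.Icc (t - 1) (t + 1)).card := by
          refine Finset.card_le_card_of_injOn (fun d : Fin ℓ => r - 1 - (d : ℕ)) ?_ ?_
          · intro d hd; exact (key d hd).2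
          · intro d1 h1 d2 h2 heq
            have k1 := (key d1 h1).1
            have k2 := (key d2 h2).1
            have heq' : r - 1 - (d1 : ℕ) = r - 1 - (d2 : ℕ) := heq
            have : (d1 : ℕ) = (d2 : ℕ) := by omega
            exact Fin.ext this
      _ ≤ 3 := by rw [Nat.card_Icc]; omega
  -- the congestion count, as a Finset card
  set cnt : (Fin ℓ → Fin ℓ) → V → ℕ → ℕ := fun D v r =>
    (Finset.univ.filter (fun j : Fin ℓ => D j ∈ B v r j)).card with hcnt
  set P : (Fin ℓ → Fin ℓ) → Prop := fun D =>
    ∀ (v : V) (r : ℕ), ((cnt D v r : ℝ)) ≤ C * Real.log n with hP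
  -- identify the good set's ncard with a filter card
  have hgood_eq :
      {D : Fin ℓ → Fin ℓ |
        ∀ (v : V) (r : ℕ),
          (({j : Fin ℓ |
              ∃ u : V, (u = v ∨ G.Adj v u) ∧
                ((D j : ℕ) + 1) + G.dist (s j) u = r}.ncard : ℝ)) ≤
            C * Real.log (Fintype.card V)}.ncard
        = (Finset.univ.filter P).card := by
    have hsets : ∀ (D : Fin ℓ → Fin ℓ) (v : V) (r : ℕ),
        {j : Fin ℓ | ∃ u : V, (u = v ∨ G.Adj v u) ∧
            ((D j : ℕ) + 1) + G.dist (s j) u = r}.ncard = cnt D v r := by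
      intro D v r
      rw [hcnt]
      rw [ncard_setOf_eq]
      congr 1
      apply Finset.filter_congr
      intro j _
      simp [hB]
    have : {D : Fin ℓ → Fin ℓ |
        ∀ (v : V) (r : ℕ),
          (({j : Fin ℓ |
              ∃ u : V, (u = v ∨ G.Adj v u) ∧
                ((D j : ℕ) + 1) + G.dist (s j) u = r}.ncard : ℝ)) ≤
            C * Real.log (Fintype.card V)} = {D | P D} := by
      ext D
      simp only [Set.mem_setOf_eq, hP]
      constructor
      · intro h v r; rw [← hsets D v r]; exact h v r
      · intro h v r; rw [hsets D v r]; exact h v r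
    rw [this, ncard_setOf_eq]
  rw [hgood_eq]
  -- complement counting
  set bad : Finset (Fin ℓ → Fin ℓ) := Finset.univ.filter (fun D => ¬ P D) with hbad
  have hsplit : (Finset.univ.filter P).card + bad.card = ℓ ^ ℓ := by
    rw [hbad, Finset.card_filter_add_card_filter_not]
    simp [Fintype.card_fun]
  -- bound the bad count
  have hbad_sub : bad ⊆ (Finset.univ : Finset V).biUnion (fun v =>
      (Finset.Icc 1 (2 * n)).biUnion (fun r =>
        Finset.univ.filter (fun D => k ≤ cnt D v r))) := by
    intro D hD
    rw [hbad, Finset.mem_filter] at hD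
    obtain ⟨-, hD⟩ := hD
    have hD' : ¬ ∀ (v : V) (r : ℕ), ((cnt D v r : ℝ)) ≤ C * Real.log n := hD
    push_neg at hD'
    replace hD := hD'
    obtain ⟨v, r, hvr⟩ := hD
    have hkcnt : k ≤ cnt D v r := by
      have : (⌊C * Real.log n⌋₊ : ℕ) < cnt D v r := by
        rw [← Nat.floor_lt hClog] at hvr
        exact hvr
      clear hgood_eq
      clear_value bad cnt B k n C
      omega
    have hcnt_pos : 0 < cnt D v r := by
      clear hgood_eq
      clear_value bad cnt B k n C
      omega
    have hne : (Finset.univ.filter (fun j : Fin ℓ => D j ∈ B v r j)).Nonempty :=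
      Finset.card_pos.mp hcnt_pos
    obtain ⟨j, hj⟩ := hne
    rw [Finset.mem_filter] at hj
    have hjB : ∃ u : V, (u = v ∨ G.Adj v u) ∧ ((D j : ℕ) + 1) + G.dist (s j) u = r := by
      have := hj.2
      rw [hB] at this
      simpa using (Finset.mem_filter.mp this).2
    obtain ⟨u, -, he⟩ := hjB
    have hdle : G.dist (s j) u ≤ n - 1 := dist_le_card_sub_one hG _ _
    have hDj : (D j : ℕ) < ℓ := (D j).isLt
    have hr : r ∈ Finset.Icc 1 (2 * n) := by
      rw [Finset.mem_Icc]
      clear hgood_eq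
      clear_value bad cnt B k n C
      omega
    rw [Finset.mem_biUnion]
    refine ⟨v, Finset.mem_univ v, ?_⟩
    rw [Finset.mem_biUnion]
    exact ⟨r, hr, by rw [Finset.mem_filter]; exact ⟨Finset.mem_univ D, hkcnt⟩⟩
  have hlocal : ∀ (v : V) (r : ℕ),
      (Finset.univ.filter (fun D : Fin ℓ → Fin ℓ => k ≤ cnt D v r)).card ≤
        Nat.choose ℓ k * (3 ^ k * ℓ ^ (ℓ - k)) := by
    intro v r
    have hsub : Finset.univ.filter (fun D : Fin ℓ → Fin ℓ => k ≤ cnt D v r) ⊆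
        (Finset.powersetCard k (Finset.univ : Finset (Fin ℓ))).biUnion (fun S =>
          Fintype.piFinset (fun j => if j ∈ S then B v r j else Finset.univ)) := by
      intro D hD
      rw [Finset.mem_filter] at hD
      obtain ⟨-, hD⟩ := hD
      rw [hcnt] at hD
      obtain ⟨S, hSsub, hScard⟩ := Finset.exists_subset_card_eq hD
      rw [Finset.mem_biUnion]
      refine ⟨S, ?_, ?_⟩
      · rw [Finset.mem_powersetCard]
        exact ⟨Finset.subset_univ S, hScard⟩
      · rw [Fintype.mem_piFinset]
        intro j
        by_cases hjS : j ∈ S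
        · simp only [hjS, if_true]
          exact (Finset.mem_filter.mp (hSsub hjS)).2
        · simp [hjS]
    calc (Finset.univ.filter (fun D : Fin ℓ → Fin ℓ => k ≤ cnt D v r)).card
        ≤ ∑ S ∈ Finset.powersetCard k (Finset.univ : Finset (Fin ℓ)),
            (Fintype.piFinset (fun j => if j ∈ S then B v r j else Finset.univ)).card :=
          (Finset.card_le_card hsub).trans Finset.card_biUnion_le
      _ ≤ ∑ S ∈ Finset.powersetCard k (Finset.univ : Finset (Fin ℓ)),
            (3 ^ k * ℓ ^ (ℓ - k)) := by
          apply Finset.sum_le_sum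
          intro S hS
          rw [Finset.mem_powersetCard] at hS
          obtain ⟨-, hScard⟩ := hS
          rw [Fintype.card_piFinset]
          have hprod : ∏ j : Fin ℓ, (if j ∈ S then B v r j else Finset.univ).card
              = (∏ j ∈ Finset.univ \ S, (if j ∈ S then B v r j else Finset.univ).card)
                * ∏ j ∈ S, (if j ∈ S then B v r j else Finset.univ).card := by
            rw [Finset.prod_sdiff (Finset.subset_univ S)]
          rw [hprod]
          have h1 : (∏ j ∈ S, (if j ∈ S then B v r j else Finset.univ).card) ≤ 3 ^ k := by
            rw [← hScard]
            apply Finset.prod_le_pow_card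
            intro j hj
            simp only [hj, if_true]
            exact hB3 v r j
          have h2 : (∏ j ∈ Finset.univ \ S, (if j ∈ S then B v r j else Finset.univ).card)
              ≤ ℓ ^ (ℓ - k) := by
            have : ∀ j ∈ Finset.univ \ S,
                (if j ∈ S then B v r j else Finset.univ).card = ℓ := by
              intro j hj
              rw [Finset.mem_sdiff] at hj
              simp [hj.2]
            rw [Finset.prod_congr rfl this, Finset.prod_const]
            rw [Finset.card_sdiff_of_subset (Finset.subset_univ S), hScard]
            simp
          calc (∏ j ∈ Finset.univ \ S, (if j ∈ S then B v r j else Finset.univ).card)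
                * ∏ j ∈ S, (if j ∈ S then B v r j else Finset.univ).card
              ≤ ℓ ^ (ℓ - k) * 3 ^ k := Nat.mul_le_mul h2 h1
            _ = 3 ^ k * ℓ ^ (ℓ - k) := Nat.mul_comm _ _
      _ = Nat.choose ℓ k * (3 ^ k * ℓ ^ (ℓ - k)) := by
          rw [Finset.sum_const, Finset.card_powersetCard, Finset.card_univ,
            Fintype.card_fin, smul_eq_mul]
  have hbad_bound : bad.card ≤ n * (2 * n) * (Nat.choose ℓ k * (3 ^ k * ℓ ^ (ℓ - k))) := by
    calc bad.card
        ≤ ((Finset.univ : Finset V).biUnion (fun v =>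
            (Finset.Icc 1 (2 * n)).biUnion (fun r =>
              Finset.univ.filter (fun D => k ≤ cnt D v r)))).card :=
          Finset.card_le_card hbad_sub
      _ ≤ ∑ v : V, ((Finset.Icc 1 (2 * n)).biUnion (fun r =>
            Finset.univ.filter (fun D => k ≤ cnt D v r))).card := Finset.card_biUnion_le
      _ ≤ ∑ v : V, ∑ r ∈ Finset.Icc 1 (2 * n),
            (Finset.univ.filter (fun D : Fin ℓ → Fin ℓ => k ≤ cnt D v r)).card :=
          Finset.sum_le_sum (fun v _ => Finset.card_biUnion_le)
      _ ≤ ∑ v : V, ∑ _r ∈ Finset.Icc 1 (2 * n),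
            (Nat.choose ℓ k * (3 ^ k * ℓ ^ (ℓ - k))) :=
          Finset.sum_le_sum (fun v _ => Finset.sum_le_sum (fun r _ => hlocal v r))
      _ = n * (2 * n) * (Nat.choose ℓ k * (3 ^ k * ℓ ^ (ℓ - k))) := by
          rw [Finset.sum_const, Finset.sum_const, Nat.card_Icc, Finset.card_univ]
          simp only [smul_eq_mul, ← hn, Nat.add_sub_cancel]
          ring
  -- combine with the counting lemma, in ℕ
  have hbadk : bad.card * 2 ^ k ≤ n * (2 * n) * (7776 * ℓ ^ ℓ) := by
    calc bad.card * 2 ^ k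
        ≤ (n * (2 * n) * (Nat.choose ℓ k * (3 ^ k * ℓ ^ (ℓ - k)))) * 2 ^ k :=
          Nat.mul_le_mul_right _ hbad_bound
      _ = n * (2 * n) * (2 ^ k * (Nat.choose ℓ k * (3 ^ k * ℓ ^ (ℓ - k)))) := by ring
      _ ≤ n * (2 * n) * (7776 * ℓ ^ ℓ) :=
          Nat.mul_le_mul_left _ (key_count ℓ k)
  -- now the real-number part
  have hbadR : (bad.card : ℝ) * 2 ^ k ≤ 15552 * (n : ℝ) ^ (2 : ℕ) * (ℓ : ℝ) ^ ℓ := by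
    have := hbadk
    have hcast : ((bad.card * 2 ^ k : ℕ) : ℝ) ≤ ((n * (2 * n) * (7776 * ℓ ^ ℓ) : ℕ) : ℝ) :=
      Nat.cast_le.mpr this
    push_cast at hcast
    calc (bad.card : ℝ) * 2 ^ k ≤ (n : ℝ) * (2 * n) * (7776 * (ℓ : ℝ) ^ ℓ) := hcast
      _ = 15552 * (n : ℝ) ^ (2 : ℕ) * (ℓ : ℝ) ^ ℓ := by ring
  -- key exponential bound : 15552 * n^(c+2) ≤ 2^k
  have hlog2 : (1 : ℝ) / 2 ≤ Real.log 2 := by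
    have := Real.log_two_gt_d9
    linarith
  have h2k : 15552 * (n : ℝ) ^ (c + 2) ≤ (2 : ℝ) ^ k := by
    have e1 : (15552 : ℝ) * (n : ℝ) ^ (c + 2) ≤ (n : ℝ) ^ (14 : ℝ) * (n : ℝ) ^ (c + 2) := by
      apply mul_le_mul_of_nonneg_right _ (Real.rpow_nonneg hn0R.le _)
      calc (15552 : ℝ) ≤ (2 : ℝ) ^ (14 : ℝ) := by
            rw [show (14 : ℝ) = ((14 : ℕ) : ℝ) by norm_num, Real.rpow_natCast]
            norm_num
        _ ≤ (n : ℝ) ^ (14 : ℝ) :=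
            Real.rpow_le_rpow (by norm_num) hn2R (by norm_num)
    have e2 : (n : ℝ) ^ (14 : ℝ) * (n : ℝ) ^ (c + 2) = (n : ℝ) ^ (c + 16) := by
      rw [← Real.rpow_add hn0R]; ring_nf
    have e3 : (n : ℝ) ^ (c + 16) ≤ (n : ℝ) ^ (C * Real.log 2) := by
      apply Real.rpow_le_rpow_of_exponent_le hn1R
      rw [hC]
      nlinarith [hlog2, hc.le]
    have e4 : (n : ℝ) ^ (C * Real.log 2) = (2 : ℝ) ^ (C * Real.log n) := by
      rw [Real.rpow_def_of_pos hn0R, Real.rpow_def_of_pos (by norm_num : (0:ℝ) < 2)]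
      congr 1
      ring
    have e5 : (2 : ℝ) ^ (C * Real.log n) ≤ (2 : ℝ) ^ (k : ℝ) := by
      apply Real.rpow_le_rpow_of_exponent_le (by norm_num)
      calc C * Real.log n ≤ (⌊C * Real.log n⌋₊ : ℝ) + 1 := (Nat.lt_floor_add_one _).le
        _ = (k : ℝ) := by rw [hk]; push_cast; ring
    have e6 : (2 : ℝ) ^ (k : ℝ) = (2 : ℝ) ^ k := Real.rpow_natCast 2 k
    calc (15552 : ℝ) * (n : ℝ) ^ (c + 2) ≤ (n : ℝ) ^ (14 : ℝ) * (n : ℝ) ^ (c + 2) := e1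
      _ = (n : ℝ) ^ (c + 16) := e2
      _ ≤ (n : ℝ) ^ (C * Real.log 2) := e3
      _ = (2 : ℝ) ^ (C * Real.log n) := e4
      _ ≤ (2 : ℝ) ^ (k : ℝ) := e5
      _ = (2 : ℝ) ^ k := e6
  -- conclude : bad.card ≤ n^(-c) * ℓ^ℓ
  have hbad_final : (bad.card : ℝ) ≤ (n : ℝ) ^ (-c) * (ℓ : ℝ) ^ ℓ := by
    have h2kpos : (0 : ℝ) < (2 : ℝ) ^ k := by positivity
    rw [← mul_le_mul_iff_of_pos_right h2kpos]
    calc (bad.card : ℝ) * 2 ^ k ≤ 15552 * (n : ℝ) ^ (2 : ℕ) * (ℓ : ℝ) ^ ℓ := hbadR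
      _ ≤ (n : ℝ) ^ (-c) * (ℓ : ℝ) ^ ℓ * 2 ^ k := by
          have hle : 15552 * (n : ℝ) ^ (2 : ℕ) ≤ (n : ℝ) ^ (-c) * 2 ^ k := by
            have hstep : (n : ℝ) ^ (-c) * (15552 * (n : ℝ) ^ (c + 2)) ≤
                (n : ℝ) ^ (-c) * (2 : ℝ) ^ k :=
              mul_le_mul_of_nonneg_left h2k (Real.rpow_nonneg hn0R.le _)
            have hid : (n : ℝ) ^ (-c) * (15552 * (n : ℝ) ^ (c + 2)) =
                15552 * (n : ℝ) ^ (2 : ℕ) := by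
              have hmid : (n : ℝ) ^ (-c) * (n : ℝ) ^ (c + 2) = (n : ℝ) ^ (2 : ℕ) := by
                rw [← Real.rpow_natCast (n : ℝ) 2, ← Real.rpow_add hn0R]
                congr 1
                push_cast
                ring
              calc (n : ℝ) ^ (-c) * (15552 * (n : ℝ) ^ (c + 2))
                  = 15552 * ((n : ℝ) ^ (-c) * (n : ℝ) ^ (c + 2)) := by ring
                _ = 15552 * (n : ℝ) ^ (2 : ℕ) := by rw [hmid]
            linarith [hstep, hid.symm.le]
          have hl0 : (0 : ℝ) ≤ (ℓ : ℝ) ^ ℓ := by positivity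
          calc 15552 * (n : ℝ) ^ (2 : ℕ) * (ℓ : ℝ) ^ ℓ
              ≤ ((n : ℝ) ^ (-c) * 2 ^ k) * (ℓ : ℝ) ^ ℓ :=
                mul_le_mul_of_nonneg_right hle hl0
            _ = (n : ℝ) ^ (-c) * (ℓ : ℝ) ^ ℓ * 2 ^ k := by ring
  -- final arithmetic
  have hgoodcard : ((Finset.univ.filter P).card : ℝ)
      = (ℓ : ℝ) ^ ℓ - (bad.card : ℝ) := by
    have : (Finset.univ.filter P).card = ℓ ^ ℓ - bad.card := by
      clear hgood_eq
      clear_value bad cnt B k n C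
      omega
    rw [this]
    have hble : bad.card ≤ ℓ ^ ℓ := by
      clear hgood_eq
      clear_value bad cnt B k n C
      omega
    push_cast [Nat.cast_sub hble]
    ring
  rw [hgoodcard]
  have : (1 - (n : ℝ) ^ (-c)) * (ℓ : ℝ) ^ ℓ
      = (ℓ : ℝ) ^ ℓ - (n : ℝ) ^ (-c) * (ℓ : ℝ) ^ ℓ := by ring
  rw [hn] at *
  linarith [hbad_final]
end

section
/- There is a universal constant C > 0 such that for every connected finite simple graph G on n ≥ 2 vertices and all positive integers k and W, there exists a finite collection 𝒞 of vertex subsets of G satisfying: (1) every S ∈ 𝒞 induces a connected subgraph of G of diameter at most C·k·W; (2) every vertex of G belongs to at most C·k·n^{1/k}·log n members of 𝒞; and (3) for every vertex v there is some S ∈ 𝒞 containing the entire ball B_G(v, W) = { u : dist_G(v,u) ≤ W }. -/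
open Finset

set_option linter.unusedSectionVars false

namespace SparseCoverAux

variable {V : Type} [Fintype V] [DecidableEq V] {G : SimpleGraph V}

/-- The closed ball of radius `W` around `v`, as a `Finset`. -/
noncomputable def ball (G : SimpleGraph V) (W : ℕ) (v : V) : Finset V :=
  (Set.toFinite {u | G.dist v u ≤ W}).toFinset

lemma mem_ball {W : ℕ} {v u : V} : u ∈ ball G W v ↔ G.dist v u ≤ W := by
  simp [ball]

lemma self_mem_ball {W : ℕ} {v : V} : v ∈ ball G W v := by
  simp [mem_ball, SimpleGraph.dist_self]

lemma ball_walk (hG : G.Connected) {W : ℕ} {v x : V} (hx : x ∈ ball G W v) :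
    ∃ p : G.Walk v x, p.length ≤ W ∧ ∀ y ∈ p.support, y ∈ ball G W v := by
  obtain ⟨p, hp⟩ := hG.exists_walk_length_eq_dist v x
  refine ⟨p, by rw [hp]; exact mem_ball.mp hx, fun y hy => ?_⟩
  rw [mem_ball]
  calc G.dist v y ≤ (p.takeUntil y hy).length := SimpleGraph.dist_le _
    _ ≤ p.length := SimpleGraph.Walk.length_takeUntil_le p hy
    _ ≤ W := by rw [hp]; exact mem_ball.mp hx

lemma induced_walk {S : Set V} : ∀ {a b : V} (p : G.Walk a b), (∀ y ∈ p.support, y ∈ S) →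
    ∀ (ha : a ∈ S) (hb : b ∈ S),
      ∃ q : (G.induce S).Walk ⟨a, ha⟩ ⟨b, hb⟩, q.length ≤ p.length := by
  intro a b p
  induction p with
  | nil =>
    intro _ ha hb
    exact ⟨SimpleGraph.Walk.nil, by simp⟩
  | @cons a c b hadj p ih =>
    intro hsup ha hb
    have hc : c ∈ S := hsup c (by simp [SimpleGraph.Walk.support_cons])
    obtain ⟨q, hq⟩ := ih (fun y hy => hsup y (by simp [SimpleGraph.Walk.support_cons, hy])) hc hb
    refine ⟨SimpleGraph.Walk.cons (by simpa using hadj : (G.induce S).Adj ⟨a, ha⟩ ⟨c, hc⟩) q, ?_⟩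
    simpa using hq

lemma hub_connected_dist {Z : Finset V} {D : ℕ} {z₀ : V} (hz₀ : z₀ ∈ Z)
    (h : ∀ x ∈ Z, ∃ p : G.Walk z₀ x, p.length ≤ D ∧ ∀ y ∈ p.support, y ∈ Z) :
    (G.induce (↑Z : Set V)).Connected ∧
      ∀ u v : (↑Z : Set V), (G.induce (↑Z : Set V)).dist u v ≤ 2 * D := by
  have hz₀' : z₀ ∈ (↑Z : Set V) := by simpa using hz₀
  have key : ∀ u : (↑Z : Set V),
      ∃ q : (G.induce (↑Z : Set V)).Walk ⟨z₀, hz₀'⟩ u, q.length ≤ D := by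
    rintro ⟨u, hu⟩
    obtain ⟨p, hlen, hsup⟩ := h u (by simpa using hu)
    obtain ⟨q, hq⟩ := induced_walk p (fun y hy => by simpa using hsup y hy) hz₀' hu
    exact ⟨q, hq.trans hlen⟩
  constructor
  · rw [SimpleGraph.connected_iff]
    refine ⟨fun u v => ?_, ⟨⟨z₀, hz₀'⟩⟩⟩
    obtain ⟨q₁, _⟩ := key u
    obtain ⟨q₂, _⟩ := key v
    exact q₁.reachable.symm.trans q₂.reachable
  · intro u v
    obtain ⟨q₁, h₁⟩ := key u
    obtain ⟨q₂, h₂⟩ := key v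
    calc (G.induce (↑Z : Set V)).dist u v ≤ (q₁.reverse.append q₂).length :=
          SimpleGraph.dist_le _
      _ = q₁.length + q₂.length := by
          simp [SimpleGraph.Walk.length_append]
      _ ≤ 2 * D := by omega

/-- A cluster is good if it has a hub from which every vertex is reachable by a short
walk staying inside the cluster. -/
def Good (G : SimpleGraph V) (k W : ℕ) (Z : Finset V) : Prop :=
  ∃ z₀ ∈ Z, ∀ x ∈ Z, ∃ p : G.Walk z₀ x, p.length ≤ 2 * k * W ∧ ∀ y ∈ p.support, y ∈ Z

lemma cluster_exists (hG : G.Connected) {k W : ℕ} (hk : 1 ≤ k)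
    {q : ℝ} (hq1 : 1 ≤ q) (hqn : (Fintype.card V : ℝ) ≤ q ^ k)
    (A : Finset V) {v : V} (hv : v ∈ A) :
    ∃ Y removed served : Finset V,
      v ∈ removed ∧ removed ⊆ A ∧ served ⊆ removed ∧
      ((removed.card : ℝ) ≤ q * served.card) ∧
      (∀ u ∈ served, ball G W u ⊆ Y) ∧
      (∀ u ∈ A, u ∉ removed → Disjoint (ball G W u) Y) ∧
      Y ⊆ A.biUnion (ball G W) ∧ Good G k W Y := by
  classical
  obtain ⟨T, hT0, hTs⟩ : ∃ T : ℕ → Finset V, T 0 = {v} ∧ ∀ i, T (i+1) =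
      A.filter (fun u => ¬ Disjoint (ball G W u) ((T i).biUnion (ball G W))) :=
    ⟨fun i => Nat.rec ({v} : Finset V)
      (fun _ Ti => A.filter (fun u => ¬ Disjoint (ball G W u) (Ti.biUnion (ball G W)))) i,
      rfl, fun _ => rfl⟩
  have hTA : ∀ i, T i ⊆ A := by
    intro i
    cases i with
    | zero => rw [hT0]; simpa using hv
    | succ i => rw [hTs]; exact filter_subset _ _
  have hmono : ∀ i, T i ⊆ T (i+1) := by
    intro i u hu
    rw [hTs]
    refine mem_filter.mpr ⟨hTA i hu, ?_⟩
    rw [Finset.not_disjoint_iff]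
    exact ⟨u, self_mem_ball, mem_biUnion.mpr ⟨u, hu, self_mem_ball⟩⟩
  have hmono' : ∀ i j, i ≤ j → T i ⊆ T j := by
    intro i j hij
    induction j with
    | zero =>
      have : i = 0 := by omega
      subst this; exact subset_rfl
    | succ j ihj =>
      by_cases h : i ≤ j
      · exact (ihj h).trans (hmono j)
      · have : i = j + 1 := by omega
        subst this; exact subset_rfl
  have hP : ∃ i, i < k ∧ ((T (i+1)).card : ℝ) ≤ q * (T i).card := by
    by_contra hcon
    push_neg at hcon
    have hq0 : (0:ℝ) ≤ q := by linarith
    have grow : ∀ i, i ≤ k - 1 → (q : ℝ) ^ i ≤ ((T i).card : ℝ) := by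
      intro i
      induction i with
      | zero => intro _; simp [hT0]
      | succ i ihi =>
        intro hik
        have h1 := ihi (by omega)
        have h2 := hcon i (by omega)
        have h3 : q * q ^ i ≤ q * ((T i).card : ℝ) := mul_le_mul_of_nonneg_left h1 hq0
        calc (q:ℝ) ^ (i+1) = q * q ^ i := by ring
          _ ≤ q * ((T i).card : ℝ) := h3
          _ ≤ ((T (i+1)).card : ℝ) := le_of_lt h2
    have h1 := grow (k-1) le_rfl
    have h2 := hcon (k-1) (by omega)
    have h3 : q * q ^ (k-1) ≤ q * ((T (k-1)).card : ℝ) := mul_le_mul_of_nonneg_left h1 hq0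
    have hqk : (q:ℝ) ^ k = q * q ^ (k-1) := by
      have h := pow_succ q (k-1)
      rw [show k - 1 + 1 = k from by omega] at h
      rw [h]; ring
    have hcardle : ((T ((k-1)+1)).card : ℝ) ≤ (Fintype.card V : ℝ) := by
      have := (card_le_card (hTA ((k-1)+1))).trans (card_le_univ A)
      exact_mod_cast this
    linarith
  obtain ⟨i₀, hi₀k, hi₀⟩ := hP
  have hex : ∃ i, ((T (i+1)).card : ℝ) ≤ q * (T i).card := ⟨i₀, hi₀⟩
  set s := Nat.find hex with hs_def
  have hsspec : ((T (s+1)).card : ℝ) ≤ q * (T s).card := Nat.find_spec hex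
  have hsk : s < k := lt_of_le_of_lt (Nat.find_min' hex hi₀) hi₀k
  refine ⟨(T s).biUnion (ball G W), T (s+1), T s, ?_, hTA (s+1), hmono s, hsspec,
      fun u hu => subset_biUnion_of_mem (ball G W) hu, ?_,
      biUnion_subset_biUnion_of_subset_left _ (hTA s), ?_⟩
  · exact hmono' 0 (s+1) (by omega) (by rw [hT0]; exact mem_singleton_self v)
  · intro u huA hunR
    by_contra hd
    exact hunR (by rw [hTs]; exact mem_filter.mpr ⟨huA, hd⟩)
  · -- Goodness via the chain lemma
    have chain : ∀ i, ∀ x ∈ (T i).biUnion (ball G W),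
        ∃ p : G.Walk v x, p.length ≤ (2*i+1)*W ∧
          ∀ y ∈ p.support, y ∈ (T i).biUnion (ball G W) := by
      intro i
      induction i with
      | zero =>
        intro x hx
        have hx' : x ∈ ball G W v := by
          rw [hT0] at hx; simpa using hx
        obtain ⟨p, h1, h2⟩ := ball_walk hG hx'
        refine ⟨p, by omega, fun y hy => ?_⟩
        rw [hT0]
        exact mem_biUnion.mpr ⟨v, mem_singleton_self v, h2 y hy⟩
      | succ i ihi =>
        intro x hx
        obtain ⟨u, hu, hxu⟩ := mem_biUnion.mp hx
        have hu' := hu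
        rw [hTs] at hu'
        obtain ⟨huA, hnd⟩ := mem_filter.mp hu'
        obtain ⟨x', hx'u, hx'Y⟩ := Finset.not_disjoint_iff.mp hnd
        obtain ⟨p₁, hl₁, hs₁⟩ := ihi x' hx'Y
        obtain ⟨p₂, hl₂, hs₂⟩ := ball_walk hG hx'u
        obtain ⟨p₃, hl₃, hs₃⟩ := ball_walk hG hxu
        refine ⟨(p₁.append p₂.reverse).append p₃, ?_, ?_⟩
        · simp only [SimpleGraph.Walk.length_append, SimpleGraph.Walk.length_reverse]
          nlinarith [hl₁, hl₂, hl₃]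
        · intro y hy
          have hbU : ball G W u ⊆ (T (i+1)).biUnion (ball G W) :=
            subset_biUnion_of_mem (ball G W) hu
          have hprev : (T i).biUnion (ball G W) ⊆ (T (i+1)).biUnion (ball G W) :=
            biUnion_subset_biUnion_of_subset_left _ (hmono i)
          rw [SimpleGraph.Walk.mem_support_append_iff] at hy
          rcases hy with hy | hy
          · rw [SimpleGraph.Walk.mem_support_append_iff] at hy
            rcases hy with hy | hy
            · exact hprev (hs₁ y hy)
            · rw [SimpleGraph.Walk.support_reverse, List.mem_reverse] at hy
              exact hbU (hs₂ y hy)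
          · exact hbU (hs₃ y hy)
    have hvY : v ∈ (T s).biUnion (ball G W) :=
      mem_biUnion.mpr ⟨v, hmono' 0 s (by omega) (by rw [hT0]; exact mem_singleton_self v),
        self_mem_ball⟩
    refine ⟨v, hvY, fun x hx => ?_⟩
    obtain ⟨p, hl, hsup⟩ := chain s x hx
    refine ⟨p, hl.trans ?_, hsup⟩
    have h2s : 2*s+1 ≤ 2*k := by omega
    exact Nat.mul_le_mul_right W h2s

lemma phase_exists (hG : G.Connected) {k W : ℕ} (hk : 1 ≤ k)
    {q : ℝ} (hq1 : 1 ≤ q) (hqn : (Fintype.card V : ℝ) ≤ q ^ k)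
    (A : Finset V) :
    ∃ 𝒞 : Finset (Finset V), ∃ D : Finset V,
      D ⊆ A ∧ ((A.card : ℝ) ≤ q * ((A.card : ℝ) - (D.card : ℝ))) ∧
      (∀ Z ∈ 𝒞, Good G k W Z) ∧
      (∀ Z₁ ∈ 𝒞, ∀ Z₂ ∈ 𝒞, Z₁ ≠ Z₂ → Disjoint Z₁ Z₂) ∧
      (∀ u ∈ A, u ∉ D → ∃ Z ∈ 𝒞, ball G W u ⊆ Z) ∧
      (∀ Z ∈ 𝒞, Z ⊆ A.biUnion (ball G W)) := by
  classical
  induction A using Finset.strongInduction with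
  | _ A ih =>
    rcases A.eq_empty_or_nonempty with rfl | ⟨v, hv⟩
    · refine ⟨∅, ∅, subset_rfl, by simp, ?_, ?_, ?_, ?_⟩ <;> simp
    · obtain ⟨Y, removed, served, hvrem, hremA, hsr, hcard, hserved, hdisj, hYsub, hgood⟩ :=
        cluster_exists hG hk hq1 hqn A hv
      have hA' : A \ removed ⊂ A := Finset.sdiff_ssubset hremA ⟨v, hvrem⟩
      obtain ⟨𝒞', D', hD'A, hcard', hgood', hdisj', hcov', hsub'⟩ := ih (A \ removed) hA'
      refine ⟨insert Y 𝒞', D' ∪ (removed \ served), ?_, ?_, ?_, ?_, ?_, ?_⟩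
      · exact union_subset (hD'A.trans sdiff_subset) ((sdiff_subset).trans hremA)
      · -- cardinality bookkeeping
        have hq0 : (0:ℝ) ≤ q := by linarith
        have e1 : ((A \ removed).card : ℝ) + removed.card = A.card := by
          exact_mod_cast congrArg (Nat.cast (R := ℝ)) (card_sdiff_add_card_eq_card hremA)
        have e2 : ((removed \ served).card : ℝ) + served.card = removed.card := by
          exact_mod_cast congrArg (Nat.cast (R := ℝ)) (card_sdiff_add_card_eq_card hsr)
        have e3 : ((D' ∪ (removed \ served)).card : ℝ) ≤ D'.card + (removed \ served).card := by
          exact_mod_cast card_union_le D' (removed \ served)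
        have hsum : ((A \ removed).card : ℝ) - D'.card + served.card
            ≤ (A.card : ℝ) - (D' ∪ (removed \ served)).card := by linarith
        have := mul_le_mul_of_nonneg_left hsum hq0
        have e4 : q * (((A \ removed).card : ℝ) - D'.card + served.card)
            = q * (((A \ removed).card : ℝ) - D'.card) + q * served.card := by ring
        linarith
      · intro Z hZ
        rcases mem_insert.mp hZ with rfl | hZ
        · exact hgood
        · exact hgood' Z hZ
      · -- pairwise disjoint
        have hYd : ∀ Z' ∈ 𝒞', Disjoint Z' Y := by
          intro Z' hZ'
          rw [Finset.disjoint_left]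
          intro x hx
          obtain ⟨u, hu, hxu⟩ := mem_biUnion.mp (hsub' Z' hZ' hx)
          have huA : u ∈ A := (mem_sdiff.mp hu).1
          have hunr : u ∉ removed := (mem_sdiff.mp hu).2
          exact Finset.disjoint_left.mp (hdisj u huA hunr) hxu
        intro Z₁ h₁ Z₂ h₂ hne
        rcases mem_insert.mp h₁ with h₁' | h₁'
        · rcases mem_insert.mp h₂ with h₂' | h₂'
          · exact absurd (h₁'.trans h₂'.symm) hne
          · rw [h₁']; exact (hYd Z₂ h₂').symm
        · rcases mem_insert.mp h₂ with h₂' | h₂'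
          · rw [h₂']; exact hYd Z₁ h₁'
          · exact hdisj' Z₁ h₁' Z₂ h₂' hne
      · intro u huA huD
        by_cases hur : u ∈ removed
        · have hus : u ∈ served := by
            by_contra hns
            exact huD (mem_union_right _ (mem_sdiff.mpr ⟨hur, hns⟩))
          exact ⟨Y, mem_insert_self _ _, hserved u hus⟩
        · have hu' : u ∈ A \ removed := mem_sdiff.mpr ⟨huA, hur⟩
          have huD' : u ∉ D' := fun h => huD (mem_union_left _ h)
          obtain ⟨Z, hZ, hball⟩ := hcov' u hu' huD'
          exact ⟨Z, mem_insert_of_mem hZ, hball⟩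
      · intro Z hZ
        rcases mem_insert.mp hZ with rfl | hZ
        · exact hYsub
        · exact (hsub' Z hZ).trans (biUnion_subset_biUnion_of_subset_left _ sdiff_subset)

lemma cover_exists (hG : G.Connected) {k W : ℕ} (hk : 1 ≤ k)
    {q : ℝ} (hq1 : 1 < q) (hqn : (Fintype.card V : ℝ) ≤ q ^ k)
    (M : Finset V) :
    ∃ 𝒞 : Finset (Finset V),
      (∀ Z ∈ 𝒞, Good G k W Z) ∧
      (∀ u ∈ M, ∃ Z ∈ 𝒞, ball G W u ⊆ Z) ∧
      (M = ∅ → 𝒞 = ∅) ∧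
      (∀ x : V, (((𝒞.filter (fun Z => x ∈ Z)).card : ℝ)) ≤ q * Real.log M.card + 1) := by
  classical
  induction M using Finset.strongInduction with
  | _ M ih =>
    rcases M.eq_empty_or_nonempty with rfl | hM
    · refine ⟨∅, by simp, by simp, by simp, fun x => ?_⟩
      have hq0 : (0:ℝ) < q := by linarith
      simp only [Finset.filter_empty, Finset.card_empty, Nat.cast_zero, Real.log_zero]
      nlinarith
    · obtain ⟨𝒞₁, D, hDM, hcard, hgood₁, hdisj₁, hcov₁, _⟩ :=
        phase_exists hG hk (le_of_lt hq1) hqn M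
      have hMpos : (0:ℝ) < M.card := by
        exact_mod_cast Finset.card_pos.mpr hM
      have hq0 : (0:ℝ) < q := by linarith
      have hMD : (D.card : ℝ) < M.card := by
        nlinarith
      have hDss : D ⊂ M := by
        refine Finset.ssubset_iff_subset_ne.mpr ⟨hDM, fun h => ?_⟩
        rw [h] at hMD; exact lt_irrefl _ hMD
      obtain ⟨𝒞₂, hgood₂, hcov₂, hemp₂, hcount₂⟩ := ih D hDss
      refine ⟨𝒞₁ ∪ 𝒞₂, ?_, ?_, ?_, ?_⟩
      · intro Z hZ
        rcases mem_union.mp hZ with h | h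
        · exact hgood₁ Z h
        · exact hgood₂ Z h
      · intro u hu
        by_cases huD : u ∈ D
        · obtain ⟨Z, hZ, hb⟩ := hcov₂ u huD
          exact ⟨Z, mem_union_right _ hZ, hb⟩
        · obtain ⟨Z, hZ, hb⟩ := hcov₁ u hu huD
          exact ⟨Z, mem_union_left _ hZ, hb⟩
      · intro h
        exact absurd h hM.ne_empty
      · intro x
        have hsplit : ((𝒞₁ ∪ 𝒞₂).filter (fun Z => x ∈ Z)).card
            ≤ (𝒞₁.filter (fun Z => x ∈ Z)).card + (𝒞₂.filter (fun Z => x ∈ Z)).card := by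
          rw [filter_union]
          exact card_union_le _ _
        have h1 : (𝒞₁.filter (fun Z => x ∈ Z)).card ≤ 1 := by
          refine Finset.card_le_one.mpr ?_
          intro a ha b hb
          obtain ⟨haC, hxa⟩ := mem_filter.mp ha
          obtain ⟨hbC, hxb⟩ := mem_filter.mp hb
          by_contra hne
          exact Finset.disjoint_left.mp (hdisj₁ a haC b hbC hne) hxa hxb
        rcases D.eq_empty_or_nonempty with rfl | hD
        · have h𝒞₂ : 𝒞₂ = ∅ := hemp₂ rfl
          have hlog0 : (0:ℝ) ≤ Real.log M.card := Real.log_nonneg (by exact_mod_cast hM.card_pos)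
          have : ((𝒞₁ ∪ 𝒞₂).filter (fun Z => x ∈ Z)).card ≤ 1 := by
            rw [h𝒞₂]
            simpa using h1
          have hle : (((𝒞₁ ∪ 𝒞₂).filter (fun Z => x ∈ Z)).card : ℝ) ≤ 1 := by exact_mod_cast this
          nlinarith
        · have hDpos : (0:ℝ) < D.card := by exact_mod_cast Finset.card_pos.mpr hD
          have hkey : (D.card : ℝ) ≤ M.card * ((q - 1)/q) := by
            rw [mul_comm, div_mul_eq_mul_div, le_div_iff₀ hq0]
            nlinarith [hcard]
          have hlogD : Real.log D.card ≤ Real.log M.card + Real.log ((q-1)/q) := by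
            have hr : (0:ℝ) < (q-1)/q := div_pos (by linarith) hq0
            calc Real.log D.card ≤ Real.log (M.card * ((q-1)/q)) :=
                  Real.log_le_log hDpos hkey
              _ = Real.log M.card + Real.log ((q-1)/q) :=
                  Real.log_mul (ne_of_gt hMpos) (ne_of_gt hr)
          have hqlog : q * Real.log ((q-1)/q) ≤ -1 := by
            have hr : (0:ℝ) < (q-1)/q := div_pos (by linarith) hq0
            have h3 : Real.log ((q-1)/q) ≤ (q-1)/q - 1 := Real.log_le_sub_one_of_pos hr
            have h4 : (q-1)/q - 1 = -(1/q) := by field_simp; ring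
            have h5 := mul_le_mul_of_nonneg_left h3 (le_of_lt hq0)
            rw [h4] at h5
            have h6 : q * -(1/q) = -1 := by field_simp
            linarith
          have hc2 := hcount₂ x
          have hlemul : q * Real.log D.card ≤ q * (Real.log M.card + Real.log ((q-1)/q)) :=
            mul_le_mul_of_nonneg_left hlogD (le_of_lt hq0)
          have hle : (((𝒞₁ ∪ 𝒞₂).filter (fun Z => x ∈ Z)).card : ℝ)
              ≤ 1 + (q * Real.log D.card + 1) := by
            have : (((𝒞₁ ∪ 𝒞₂).filter (fun Z => x ∈ Z)).card : ℝ)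
                ≤ ((𝒞₁.filter (fun Z => x ∈ Z)).card : ℝ)
                  + ((𝒞₂.filter (fun Z => x ∈ Z)).card : ℝ) := by exact_mod_cast hsplit
            have h1' : ((𝒞₁.filter (fun Z => x ∈ Z)).card : ℝ) ≤ 1 := by exact_mod_cast h1
            linarith
          nlinarith
  
end SparseCoverAux


/-- **Sparse neighborhood covers exist.** There is a universal `C > 0` such that every
connected graph `G` on `n ≥ 2` vertices and all positive integers `k`, `W` admit a finite
collection `S 0, …, S (N-1)` of vertex subsets with: (1) each `S i` induces a connected
subgraph of diameter at most `C·k·W`; (2) each vertex belongs to at most `C·k·n^{1/k}·log n`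
of the subsets; (3) for each vertex `v` some `S i` contains the whole ball of radius `W`
around `v`. -/
theorem sparse_neighborhood_cover_exists :
    ∃ C : ℝ, 0 < C ∧
      ∀ (V : Type) [Fintype V] (G : SimpleGraph V), G.Connected →
        2 ≤ Fintype.card V →
        ∀ k W : ℕ, 1 ≤ k → 1 ≤ W →
        ∃ (N : ℕ) (S : Fin N → Set V),
          (∀ i, (G.induce (S i)).Connected ∧
            ∀ u v : S i, (((G.induce (S i)).dist u v : ℝ)) ≤ C * k * W) ∧
          (∀ v : V, (({i | v ∈ S i}.ncard : ℝ)) ≤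
            C * k * (Fintype.card V : ℝ) ^ ((1 : ℝ) / k) * Real.log (Fintype.card V)) ∧
          (∀ v : V, ∃ i, ∀ u : V, G.dist v u ≤ W → u ∈ S i) := by
  classical
  refine ⟨10, by norm_num, ?_⟩
  intro V _ G hG hn2 k W hk hW
  letI : DecidableEq V := Classical.decEq V
  set n := Fintype.card V with hn
  set q : ℝ := (n : ℝ) ^ ((1 : ℝ) / k) with hqdef
  have hkR : (1:ℝ) ≤ (k:ℝ) := by exact_mod_cast hk
  have hkne : (k:ℝ) ≠ 0 := by positivity
  have hnpos : (0:ℝ) < n := by positivity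
  have hn1 : (1:ℝ) < (n:ℝ) := by exact_mod_cast hn2.trans_lt' one_lt_two
  have hq1 : 1 < q := by
    rw [hqdef]
    rw [Real.one_lt_rpow_iff_of_pos hnpos]
    left
    constructor
    · exact hn1
    · positivity
  have hqk : q ^ k = (n : ℝ) := by
    rw [hqdef, ← Real.rpow_natCast ((n:ℝ) ^ ((1:ℝ)/k)) k, ← Real.rpow_mul (le_of_lt hnpos)]
    rw [one_div_mul_cancel hkne, Real.rpow_one]
  have hqn : (Fintype.card V : ℝ) ≤ q ^ k := by rw [hqk]
  obtain ⟨𝒞, hgood, hcov, _, hcount⟩ :=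
    SparseCoverAux.cover_exists hG hk hq1 hqn (Finset.univ : Finset V)
  refine ⟨𝒞.card, fun i => (↑(↑(𝒞.equivFin.symm i) : Finset V) : Set V), ?_, ?_, ?_⟩
  · intro i
    set Z : Finset V := (↑(𝒞.equivFin.symm i) : Finset V) with hZdef
    have hZ : Z ∈ 𝒞 := (𝒞.equivFin.symm i).2
    obtain ⟨z₀, hz₀, hhub⟩ := hgood Z hZ
    obtain ⟨hconn, hdist⟩ := SparseCoverAux.hub_connected_dist hz₀ hhub
    refine ⟨hconn, fun u v => ?_⟩
    have h1 : ((G.induce (↑Z : Set V)).dist u v : ℝ) ≤ ((2 * (2 * k * W) : ℕ) : ℝ) := by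
      exact_mod_cast hdist u v
    have h2 : ((2 * (2 * k * W) : ℕ) : ℝ) ≤ 10 * k * W := by
      push_cast
      nlinarith [hkR, (by exact_mod_cast hW : (1:ℝ) ≤ (W:ℝ))]
    exact h1.trans h2
  · intro v
    have hset : {i | v ∈ (↑(↑(𝒞.equivFin.symm i) : Finset V) : Set V)}
        = ↑(Finset.univ.filter (fun i : Fin 𝒞.card => v ∈ (↑(𝒞.equivFin.symm i) : Finset V))) := by
      ext i
      simp
    rw [hset, Set.ncard_coe_finset]
    have hinj : (Finset.univ.filter
          (fun i : Fin 𝒞.card => v ∈ (↑(𝒞.equivFin.symm i) : Finset V))).card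
        ≤ (𝒞.filter (fun Z => v ∈ Z)).card := by
      refine Finset.card_le_card_of_injOn (fun i => (↑(𝒞.equivFin.symm i) : Finset V)) ?_ ?_
      · intro i hi
        rw [Finset.mem_coe, Finset.mem_filter] at hi ⊢
        exact ⟨(𝒞.equivFin.symm i).2, hi.2⟩
      · intro i _ j _ hij
        have : 𝒞.equivFin.symm i = 𝒞.equivFin.symm j := Subtype.ext hij
        exact 𝒞.equivFin.symm.injective this
    have hc := hcount v
    rw [Finset.card_univ] at hc
    have hL2 : Real.log 2 ≤ Real.log n := by
      apply Real.log_le_log (by norm_num)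
      exact_mod_cast hn2
    have hlog2 : (0.6931471803 : ℝ) < Real.log 2 := Real.log_two_gt_d9
    have hq1' : (1:ℝ) ≤ q := le_of_lt hq1
    have hlogn : (0:ℝ) < Real.log n := by linarith
    have hfin : q * Real.log n + 1 ≤ 10 * k * q * Real.log n := by
      nlinarith [mul_le_mul_of_nonneg_left hq1' (le_of_lt hlogn),
        mul_le_mul_of_nonneg_left hkR (mul_nonneg (le_of_lt hlogn) (by linarith : (0:ℝ) ≤ q))]
    calc ((Finset.univ.filter
          (fun i : Fin 𝒞.card => v ∈ (↑(𝒞.equivFin.symm i) : Finset V))).card : ℝ)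
        ≤ ((𝒞.filter (fun Z => v ∈ Z)).card : ℝ) := by exact_mod_cast hinj
      _ ≤ q * Real.log n + 1 := hc
      _ ≤ 10 * k * q * Real.log n := hfin
      _ = 10 * ↑k * (n : ℝ) ^ ((1 : ℝ) / k) * Real.log n := by rw [hqdef]
  · intro v
    obtain ⟨Z, hZ, hball⟩ := hcov v (Finset.mem_univ v)
    refine ⟨𝒞.equivFin ⟨Z, hZ⟩, fun u hu => ?_⟩
    simp only [Equiv.symm_apply_apply]
    exact Finset.mem_coe.mpr (hball (SparseCoverAux.mem_ball.mpr hu))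
end

section
/- There is a universal constant C > 0 such that the following holds. Let G be a finite simple graph on n ≥ 2 vertices, let ε ∈ (0, 1], and set κ = ⌈1/ε⌉. Then there exist: nested vertex subsets V(G) = V_0 ⊇ V_1 ⊇ ⋯ ⊇ V_κ = ∅; for each 0 ≤ i ≤ κ−1 a partition 𝒞_i of V_i into nonempty clusters; sets L_i = V_{i−1} \ V_i for 1 ≤ i ≤ κ; and edge sets F_i ⊆ E(G) for 1 ≤ i ≤ κ; such that: (a) for every 0 ≤ i ≤ κ−1, every cluster A ∈ 𝒞_i has strong radius at most i, i.e., the induced subgraph G[A] is connected and contains a vertex x with dist_{G[A]}(x, u) ≤ i for all u ∈ A; (b) for every 1 ≤ i ≤ κ and every v ∈ L_i, at most C·n^{ε}·log n edges of F_i are incident to v, each such edge joins v to a vertex of a cluster of 𝒞_{i−1} with distinct edges going to distinct clusters, and for every cluster of 𝒞_{i−1} that contains a neighbor of v there is at least one edge of F_i from v into that cluster; and (c) for every edge {u, v} ∈ E(G) with u ∈ L_i, v ∈ L_j and i ≤ j, either some cluster of 𝒞_{i−1} contains both u and v, or there is an edge {u, w} ∈ F_i and a cluster of 𝒞_{i−1}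 containing both w and v. -/
open Classical Set

namespace BS

open Classical Set


/-- Greedy set-cover lemma (division-free form). -/
lemma exists_cover {α β : Type} [DecidableEq β] (S : Finset β) (R : α → β → Prop)
    [∀ v A, Decidable (R v A)] (D : ℝ) (hD : 0 < D) :
    ∀ W : Finset α, (∀ v ∈ W, D ≤ ((S.filter fun A => R v A).card : ℝ)) →
      ∃ T ⊆ S, ((T.card : ℝ) * D ≤ (S.card : ℝ) * (Real.log W.card + 1)) ∧
        ∀ v ∈ W, ∃ A ∈ T, R v A := by
  intro W
  induction W using Finset.strongInduction with
  | _ W ih =>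
    intro hW
    rcases eq_or_ne W ∅ with rfl | hne
    · refine ⟨∅, Finset.empty_subset _, by simp, by simp⟩
    have hWne : W.Nonempty := Finset.nonempty_of_ne_empty hne
    have hWpos : 0 < (W.card : ℝ) := by exact_mod_cast Finset.card_pos.mpr hWne
    obtain ⟨v₀, hv₀⟩ := hWne
    have hSm : D ≤ (S.card : ℝ) := by
      refine (hW v₀ hv₀).trans ?_
      exact_mod_cast Finset.card_le_card (Finset.filter_subset _ _)
    have hSpos : 0 < (S.card : ℝ) := lt_of_lt_of_le hD hSm
    have hSne : S.Nonempty := Finset.card_pos.mp (by exact_mod_cast hSpos)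
    have hw1 : (1 : ℝ) ≤ (W.card : ℝ) := by exact_mod_cast Finset.card_pos.mpr ⟨v₀, hv₀⟩
    have hlogw : 0 ≤ Real.log W.card := Real.log_nonneg hw1
    -- double counting
    have hswap : ∑ v ∈ W, ((S.filter fun A => R v A).card : ℝ)
        = ∑ A ∈ S, ((W.filter fun v => R v A).card : ℝ) := by
      simp only [Finset.natCast_card_filter]
      exact Finset.sum_comm
    have hsum : D * W.card ≤ ∑ A ∈ S, ((W.filter fun v => R v A).card : ℝ) := by
      rw [← hswap]
      calc D * W.card = ∑ _v ∈ W, D := by rw [Finset.sum_const]; push_cast; ring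
        _ ≤ _ := Finset.sum_le_sum hW
    have hex : ∃ A₀ ∈ S, D * W.card ≤ (S.card : ℝ) * ((W.filter fun v => R v A₀).card) := by
      by_contra hcon
      push_neg at hcon
      have h4 : ∑ A ∈ S, (S.card : ℝ) * ((W.filter fun v => R v A).card)
          < ∑ _A ∈ S, D * W.card :=
        Finset.sum_lt_sum_of_nonempty hSne (by
          intro A hA
          have := hcon A hA
          linarith)
      rw [Finset.sum_const, ← Finset.mul_sum] at h4
      have := mul_le_mul_of_nonneg_left hsum (le_of_lt hSpos)
      rw [nsmul_eq_mul] at h4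
      linarith
    obtain ⟨A₀, hA₀S, hA₀⟩ := hex
    set k := ((W.filter fun v => R v A₀).card : ℝ) with hk
    have hkpos : 0 < k := by
      by_contra hco
      push_neg at hco
      have h0 : (S.card : ℝ) * k ≤ 0 := mul_nonpos_of_nonneg_of_nonpos hSpos.le hco
      nlinarith [mul_pos hD hWpos]
    set W' := W.filter fun v => ¬ R v A₀ with hW'
    have hW'card : (W'.card : ℝ) = (W.card : ℝ) - k := by
      have hnat := Finset.card_filter_add_card_filter_not (s := W) (p := fun v => R v A₀)
      have hcast : ((W.filter fun v => R v A₀).card : ℝ)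
          + ((W.filter fun v => ¬ R v A₀).card : ℝ) = (W.card : ℝ) := by
        exact_mod_cast hnat
      rw [hk]
      rw [hW']
      linarith
    rcases eq_or_ne W' ∅ with hW'e | hW'ne
    · -- A₀ alone covers W
      refine ⟨{A₀}, by simpa using hA₀S, ?_, ?_⟩
      · simp only [Finset.card_singleton, Nat.cast_one, one_mul]
        nlinarith
      · intro v hv
        refine ⟨A₀, Finset.mem_singleton_self _, ?_⟩
        by_contra hR
        have : v ∈ W' := Finset.mem_filter.mpr ⟨hv, hR⟩
        simp [hW'e] at this
    · have hssub : W' ⊂ W := by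
        refine Finset.ssubset_iff_subset_ne.mpr ⟨Finset.filter_subset _ _, ?_⟩
        intro hEq
        rw [hEq] at hW'card
        nlinarith
      obtain ⟨T', hT'S, hT'card, hT'cov⟩ := ih W' hssub
        (fun v hv => hW v (Finset.mem_of_mem_filter v hv))
      refine ⟨insert A₀ T', Finset.insert_subset hA₀S hT'S, ?_, ?_⟩
      · have hTins : ((insert A₀ T').card : ℝ) ≤ (T'.card : ℝ) + 1 := by
          exact_mod_cast Finset.card_insert_le _ _
        have hW'pos : 0 < (W'.card : ℝ) := by
          exact_mod_cast Finset.card_pos.mpr (Finset.nonempty_of_ne_empty hW'ne)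
        -- log W' ≤ log W - D/m
        set m := (S.card : ℝ)
        have hmD : 0 < m - D ∨ (W'.card : ℝ) ≤ 0 := by
          rcases lt_or_ge D m with h | h
          · exact Or.inl (by linarith)
          · right
            nlinarith
        have hmDpos : 0 < m - D := by
          rcases hmD with h | h
          · exact h
          · linarith
        have h5 : (W'.card : ℝ) ≤ (W.card : ℝ) * ((m - D) / m) := by
          rw [hW'card]
          have hth : D * (W.card : ℝ) * m⁻¹ ≤ k := by
            have h' : m * k * m⁻¹ = k := by field_simp
            calc D * (W.card : ℝ) * m⁻¹ ≤ m * k * m⁻¹ := by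
                  apply mul_le_mul_of_nonneg_right _ (by positivity)
                  linarith
              _ = k := h'
          have hexp : (W.card : ℝ) * ((m - D) / m) = (W.card : ℝ) - D * (W.card : ℝ) * m⁻¹ := by
            field_simp
          rw [hexp]
          linarith
        have hlog' : Real.log (W'.card : ℝ) ≤ Real.log (W.card : ℝ) - D / m := by
          have h6 : Real.log (W'.card : ℝ) ≤ Real.log ((W.card : ℝ) * ((m - D) / m)) :=
            Real.log_le_log hW'pos h5
          have h7 : Real.log ((W.card : ℝ) * ((m - D) / m))
              = Real.log (W.card : ℝ) + Real.log ((m - D) / m) :=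
            Real.log_mul (ne_of_gt hWpos) (by positivity)
          have h8 : Real.log ((m - D) / m) ≤ (m - D) / m - 1 :=
            Real.log_le_sub_one_of_pos (by positivity)
          have h9 : (m - D) / m - 1 = - (D / m) := by field_simp; ring
          rw [h7] at h6
          rw [h9] at h8
          linarith
        have e1 : ((insert A₀ T').card : ℝ) * D ≤ ((T'.card : ℝ) + 1) * D :=
          mul_le_mul_of_nonneg_right hTins hD.le
        have e3 : m * Real.log W'.card ≤ m * (Real.log W.card - D / m) :=
          mul_le_mul_of_nonneg_left hlog' hSpos.le
        have e4 : m * (Real.log W.card - D / m) = m * Real.log W.card - D := by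
          field_simp
        nlinarith [hT'card, e1, e3, e4]
      · intro v hv
        by_cases hR : R v A₀
        · exact ⟨A₀, Finset.mem_insert_self _ _, hR⟩
        · obtain ⟨A, hA, hRA⟩ := hT'cov v (Finset.mem_filter.mpr ⟨hv, hR⟩)
          exact ⟨A, Finset.mem_insert_of_mem hA, hRA⟩





/-- Inclusion homomorphism between induced subgraphs. -/
def inclHom (G : SimpleGraph V) {A B : Set V} (h : A ⊆ B) :
    G.induce A →g G.induce B :=
  ⟨Set.inclusion h, fun {a b} hadj => hadj⟩

lemma extend_cluster (G : SimpleGraph V) {A X : Set V} (i : ℕ)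
    (hconn : (G.induce A).Connected)
    (x : V) (hx : x ∈ A) (hrad : ∀ u : A, (G.induce A).dist ⟨x, hx⟩ u ≤ i)
    (hX : ∀ v ∈ X, ∃ u ∈ A, G.Adj v u) :
    (G.induce (A ∪ X)).Connected ∧
      ∃ y : ↥(A ∪ X), ∀ u : ↥(A ∪ X), (G.induce (A ∪ X)).dist y u ≤ i + 1 := by
  classical
  have hsub : A ⊆ A ∪ X := Set.subset_union_left
  set y : ↥(A ∪ X) := ⟨x, hsub hx⟩ with hy
  have keyA : ∀ (u : V) (hu : u ∈ A),
      ∃ p : (G.induce (A ∪ X)).Walk y ⟨u, hsub hu⟩, p.length ≤ i := by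
    intro u hu
    obtain ⟨p, hp⟩ :=
      (hconn.preconnected ⟨x, hx⟩ ⟨u, hu⟩).exists_walk_length_eq_dist
    refine ⟨p.map (inclHom G hsub), ?_⟩
    refine ((SimpleGraph.Walk.length_map _ _).trans hp).trans_le ?_
    exact hrad ⟨u, hu⟩
  have key : ∀ u : ↥(A ∪ X), ∃ p : (G.induce (A ∪ X)).Walk y u, p.length ≤ i + 1 := by
    rintro ⟨u, hu⟩
    by_cases huA : u ∈ A
    · obtain ⟨p, hp⟩ := keyA u huA
      exact ⟨p, hp.trans (Nat.le_succ i)⟩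
    · have huX : u ∈ X := hu.resolve_left huA
      obtain ⟨u₀, hu₀A, hadj⟩ := hX u huX
      obtain ⟨p, hp⟩ := keyA u₀ hu₀A
      have hadj' : (G.induce (A ∪ X)).Adj ⟨u₀, hsub hu₀A⟩ ⟨u, hu⟩ := hadj.symm
      refine ⟨p.concat hadj', ?_⟩
      rw [SimpleGraph.Walk.length_concat]
      omega
  have hreach : ∀ u : ↥(A ∪ X), (G.induce (A ∪ X)).Reachable y u :=
    fun u => ⟨(key u).choose⟩
  haveI : Nonempty ↥(A ∪ X) := ⟨y⟩
  refine ⟨⟨fun a b => (hreach a).symm.trans (hreach b)⟩, y, fun u => ?_⟩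
  exact le_trans (SimpleGraph.dist_le (key u).choose) (key u).choose_spec

lemma singleton_cluster (G : SimpleGraph V) (v : V) :
    (G.induce ({v} : Set V)).Connected ∧
      ∃ x : ({v} : Set V), ∀ u : ({v} : Set V),
        (G.induce ({v} : Set V)).dist x u ≤ 0 := by
  have hall : ∀ u : ({v} : Set V), u = ⟨v, rfl⟩ := by
    rintro ⟨u, hu⟩
    exact Subtype.ext hu
  haveI : Nonempty ({v} : Set V) := ⟨⟨v, rfl⟩⟩
  constructor
  · refine ⟨fun a b => ?_⟩
    rw [hall a, hall b]
  · refine ⟨⟨v, rfl⟩, fun u => ?_⟩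
    rw [hall u, SimpleGraph.dist_self]


variable {V : Type} [Fintype V]

/-- The invariant carried by each level of the hierarchy. -/
def Inv (G : SimpleGraph V) (ε : ℝ) (i : ℕ) (P : Set (Set V)) : Prop :=
  (∀ A ∈ P, A.Nonempty) ∧
  (∀ A ∈ P, ∀ B ∈ P, A ≠ B → Disjoint A B) ∧
  (∀ A ∈ P, (G.induce A).Connected ∧
    ∃ x : A, ∀ u : A, (G.induce A).dist x u ≤ i) ∧
  ((P.ncard : ℝ) * ((Fintype.card V : ℝ) ^ ε) ^ i ≤ (Fintype.card V : ℝ))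

lemma base_inv (G : SimpleGraph V) (ε : ℝ) :
    Inv G ε 0 (Set.range fun v => ({v} : Set V)) := by
  refine ⟨?_, ?_, ?_, ?_⟩
  · rintro A ⟨v, rfl⟩; exact ⟨v, rfl⟩
  · rintro A ⟨v, rfl⟩ B ⟨w, rfl⟩ hne
    refine Set.disjoint_singleton.mpr fun h => hne (by rw [h])
  · rintro A ⟨v, rfl⟩
    exact singleton_cluster G v
  · have h1 : (Set.range fun v => ({v} : Set V)) = (fun v => ({v} : Set V)) '' Set.univ := by
      rw [Set.image_univ]
    rw [h1, Set.ncard_image_of_injective _ Set.singleton_injective, Set.ncard_univ,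
      Nat.card_eq_fintype_card, pow_zero, mul_one]

lemma log_ge (hn : 2 ≤ Fintype.card V) : (1:ℝ)/3 ≤ Real.log (Fintype.card V) := by
  have h2 : (2:ℝ) ≤ (Fintype.card V : ℝ) := by exact_mod_cast hn
  have := Real.log_two_gt_d9
  have hm := Real.log_le_log (by norm_num) h2
  linarith

set_option maxHeartbeats 1000000 in
lemma step_inv (G : SimpleGraph V) (ε : ℝ) (hn : 2 ≤ Fintype.card V)
    (hε : 0 < ε) (i : ℕ) (P : Set (Set V)) (h : Inv G ε i P) :
    ∃ P' : Set (Set V), Inv G ε (i + 1) P' ∧ ⋃₀ P' ⊆ ⋃₀ P ∧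
      ∀ v ∈ ⋃₀ P \ ⋃₀ P',
        ({A | A ∈ P ∧ ∃ u ∈ A, v = u ∨ G.Adj v u}.ncard : ℝ) ≤
          (Fintype.card V : ℝ) ^ ε * (Real.log (Fintype.card V) + 1) := by
  classical
  obtain ⟨hne, hdisj, hrad, hcard⟩ := h
  set n : ℝ := (Fintype.card V : ℝ) with hn'
  have hn2 : (2:ℝ) ≤ n := by rw [hn']; exact_mod_cast hn
  have hnpos : (0:ℝ) < n := by linarith
  have hlog : (1:ℝ)/3 ≤ Real.log n := log_ge hn
  have hrp : (0:ℝ) < n ^ ε := Real.rpow_pos_of_pos hnpos ε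
  set D : ℝ := n ^ ε * (Real.log n + 1) with hD'
  have hDpos : 0 < D := by
    apply mul_pos hrp
    linarith
  set S : Finset (Set V) := (Set.toFinite P).toFinset with hS'
  have hScoe : (S : Set (Set V)) = P := Set.Finite.coe_toFinset _
  have hmemS : ∀ A, A ∈ S ↔ A ∈ P := fun A => by
    rw [← hScoe]; rfl
  set R : V → Set V → Prop := fun v A => ∃ u ∈ A, v = u ∨ G.Adj v u with hR'
  set W : Finset V := Finset.univ.filter
    (fun v => v ∈ ⋃₀ P ∧ D ≤ ((S.filter fun A => R v A).card : ℝ)) with hW'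
  obtain ⟨T, hTS, hTcard, hTcov⟩ :=
    exists_cover S R D hDpos W (fun v hv => (Finset.mem_filter.mp hv).2.2)
  -- the attachment choice
  set att : V → Set V := fun v =>
    Classical.epsilon (fun A => A ∈ T ∧ ∃ u ∈ A, G.Adj v u) with hatt'
  have hattspec : ∀ v : V, (∃ A, A ∈ T ∧ ∃ u ∈ A, G.Adj v u) →
      att v ∈ T ∧ ∃ u ∈ att v, G.Adj v u := fun v h => Classical.epsilon_spec h
  set fr : Set V → Set V := fun A =>
    {v | v ∈ ⋃₀ P ∧ (∀ B ∈ T, v ∉ B) ∧ (∃ B ∈ T, ∃ u ∈ B, G.Adj v u) ∧ att v = A}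
    with hfr'
  set nc : Set V → Set V := fun A => A ∪ fr A with hnc'
  set P' : Set (Set V) := nc '' (T : Set (Set V)) with hP''
  have hfradj : ∀ A, ∀ v ∈ fr A, ∃ u ∈ A, G.Adj v u := by
    intro A v hv
    obtain ⟨_, _, hex, hattv⟩ := hv
    have := hattspec v (by
      obtain ⟨B, hB, hu⟩ := hex
      exact ⟨B, hB, hu⟩)
    rw [hattv] at this
    exact this.2
  have hTP : ∀ A ∈ T, A ∈ P := fun A hA => (hmemS A).mp (hTS hA)
  refine ⟨P', ⟨?_, ?_, ?_, ?_⟩, ?_, ?_⟩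
  · -- nonempty
    rintro A' ⟨A, hA, rfl⟩
    obtain ⟨v, hv⟩ := hne A (hTP A hA)
    exact ⟨v, Or.inl hv⟩
  · -- disjoint
    rintro A' ⟨A, hA, rfl⟩ B' ⟨B, hB, rfl⟩ hneq
    have hAB : A ≠ B := fun hEq => hneq (by rw [hEq])
    have hdAB : Disjoint A B := hdisj A (hTP A hA) B (hTP B hB) hAB
    rw [Set.disjoint_left]
    rintro v hv hv'
    rcases hv with hvA | hvA
    · rcases hv' with hvB | hvB
      · exact (Set.disjoint_left.mp hdAB hvA) hvB
      · exact hvB.2.1 A hA hvA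
    · rcases hv' with hvB | hvB
      · exact hvA.2.1 B hB hvB
      · exact hAB (hvA.2.2.2.symm.trans hvB.2.2.2)
  · -- radius
    rintro A' ⟨A, hA, rfl⟩
    obtain ⟨hconn, x, hx⟩ := hrad A (hTP A hA)
    exact extend_cluster G i hconn x.1 x.2 (fun u => hx u) (hfradj A)
  · -- cardinality
    have h1 : (P'.ncard : ℝ) ≤ (T.card : ℝ) := by
      have := Set.ncard_image_le (f := nc) (s := (T : Set (Set V))) (T.finite_toSet)
      rw [Set.ncard_coe_finset] at this
      rw [hP'']
      exact_mod_cast this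
    have hPS : (P.ncard : ℝ) = (S.card : ℝ) := by
      rw [← hScoe, Set.ncard_coe_finset]
    have hWn : (W.card : ℝ) ≤ n := by
      rw [hn']
      exact_mod_cast Finset.card_le_univ W
    have hlogW : Real.log W.card + 1 ≤ Real.log n + 1 := by
      rcases eq_or_ne W.card 0 with h0 | h0
      · rw [h0]
        simp only [Nat.cast_zero, Real.log_zero]
        linarith
      · have : (0:ℝ) < W.card := by
          have : 0 < W.card := Nat.pos_of_ne_zero h0
          exact_mod_cast this
        linarith [Real.log_le_log this hWn]
    have h2 : (T.card : ℝ) * D ≤ (P.ncard : ℝ) * (Real.log n + 1) := by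
      rw [hPS]
      calc (T.card : ℝ) * D ≤ (S.card : ℝ) * (Real.log W.card + 1) := hTcard
        _ ≤ (S.card : ℝ) * (Real.log n + 1) := by
            exact mul_le_mul_of_nonneg_left hlogW (Nat.cast_nonneg _)
    have h3 : (T.card : ℝ) * (n ^ ε) ≤ (P.ncard : ℝ) := by
      have hl1 : (0:ℝ) < Real.log n + 1 := by linarith
      rw [hD'] at h2
      have h2' : (T.card : ℝ) * (n ^ ε) * (Real.log n + 1)
          ≤ (P.ncard : ℝ) * (Real.log n + 1) := by
        calc (T.card : ℝ) * (n ^ ε) * (Real.log n + 1)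
            = (T.card : ℝ) * (n ^ ε * (Real.log n + 1)) := by ring
          _ ≤ _ := h2
      exact le_of_mul_le_mul_right h2' hl1
    calc (P'.ncard : ℝ) * (n ^ ε) ^ (i + 1)
        = (P'.ncard : ℝ) * (n ^ ε) * (n ^ ε) ^ i := by ring
      _ ≤ (T.card : ℝ) * (n ^ ε) * (n ^ ε) ^ i := by
          apply mul_le_mul_of_nonneg_right _ (pow_nonneg hrp.le i)
          exact mul_le_mul_of_nonneg_right h1 hrp.le
      _ ≤ (P.ncard : ℝ) * (n ^ ε) ^ i := by
          exact mul_le_mul_of_nonneg_right h3 (pow_nonneg hrp.le i)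
      _ ≤ n := hcard
  · -- subset
    rintro v ⟨A', ⟨A, hA, rfl⟩, hv⟩
    rcases hv with hv | hv
    · exact ⟨A, hTP A hA, hv⟩
    · exact hv.1
  · -- removal
    rintro v ⟨hvP, hvP'⟩
    have hnotW : v ∉ W := by
      intro hvW
      obtain ⟨A, hA, u, hu, heq⟩ := hTcov v hvW
      rcases heq with rfl | hadj
      · exact hvP' ⟨nc A, ⟨A, hA, rfl⟩, Or.inl hu⟩
      · by_cases hB : ∃ B ∈ T, v ∈ B
        · obtain ⟨B, hB, hvB⟩ := hB
          exact hvP' ⟨nc B, ⟨B, hB, rfl⟩, Or.inl hvB⟩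
        · push_neg at hB
          have hex : ∃ B, B ∈ T ∧ ∃ u ∈ B, G.Adj v u := ⟨A, hA, u, hu, hadj⟩
          obtain ⟨hattT, hattadj⟩ := hattspec v hex
          refine hvP' ⟨nc (att v), ⟨att v, hattT, rfl⟩, Or.inr ?_⟩
          exact ⟨hvP, hB, ⟨A, hA, u, hu, hadj⟩, rfl⟩
    have hlt : ¬ (D ≤ ((S.filter fun A => R v A).card : ℝ)) := by
      intro hge
      exact hnotW (Finset.mem_filter.mpr ⟨Finset.mem_univ v, hvP, hge⟩)
    push_neg at hlt
    have hsets : {A | A ∈ P ∧ ∃ u ∈ A, v = u ∨ G.Adj v u}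
        = ((S.filter fun A => R v A) : Set (Set V)) := by
      ext A
      simp only [Finset.coe_filter, Set.mem_setOf_eq, hmemS, hR']
    rw [hsets, Set.ncard_coe_finset]
    rw [hD'] at hlt
    exact le_of_lt hlt

end BS

open BS in
/-- **Baswana–Sen cluster hierarchy exists.** There is a universal constant `C > 0` such that
for every finite simple graph `G` on `n ≥ 2` vertices and every `ε ∈ (0,1]`, setting
`κ = ⌈1/ε⌉`, there exist nested vertex sets `V = Vs 0 ⊇ Vs 1 ⊇ ⋯ ⊇ Vs κ = ∅`, for each
`0 ≤ i ≤ κ-1` a partition `𝒞 i` of `Vs i` into nonempty clusters, level sets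
`L i = Vs (i-1) \ Vs i`, and inter-cluster communication edge sets `F i` (oriented from the
`L i` endpoint), satisfying properties (a) strong radius `≤ i` of clusters of `𝒞 i`,
(b) each `v ∈ L i` has at most `C·n^ε·log n` incident edges in `F i`, each going into a
cluster of `𝒞 (i-1)`, distinct edges into distinct clusters, and at least one edge into every
cluster of `𝒞 (i-1)` containing a neighbor of `v`, and (c) for every edge `{u,v}` with
`u ∈ L i`, `v ∈ L j`, `i ≤ j`, either some cluster of `𝒞 (i-1)` contains both `u` and `v`, or
some edge `(u,w) ∈ F i` has `w` in a cluster of `𝒞 (i-1)` containing `v`. -/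
theorem baswana_sen_hierarchy_exists :
    ∃ C : ℝ, 0 < C ∧
      ∀ (V : Type) [Fintype V] (G : SimpleGraph V) (ε : ℝ),
        0 < ε → ε ≤ 1 → 2 ≤ Fintype.card V →
        ∃ (κ : ℕ) (Vs : ℕ → Set V) (𝒞 : ℕ → Set (Set V)) (F : ℕ → Set (V × V)),
          κ = ⌈1 / ε⌉₊ ∧
          Vs 0 = Set.univ ∧ Vs κ = ∅ ∧
          (∀ i, i < κ → Vs (i + 1) ⊆ Vs i) ∧
          -- `𝒞 i` is a partition of `Vs i` into nonempty clusters
          (∀ i, i < κ →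
            (∀ A ∈ 𝒞 i, A.Nonempty) ∧
            (∀ A ∈ 𝒞 i, ∀ B ∈ 𝒞 i, A ≠ B → Disjoint A B) ∧
            ⋃₀ 𝒞 i = Vs i) ∧
          -- `F i` consists of edges of `G` oriented from their endpoint in `L i`
          (∀ i, 1 ≤ i → i ≤ κ → ∀ v w : V, (v, w) ∈ F i →
            v ∈ Vs (i - 1) \ Vs i ∧ G.Adj v w) ∧
          -- (a) strong radius at most `i`
          (∀ i, i < κ → ∀ A ∈ 𝒞 i, (G.induce A).Connected ∧
            ∃ x : A, ∀ u : A, (G.induce A).dist x u ≤ i) ∧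
          -- (b)
          (∀ i, 1 ≤ i → i ≤ κ → ∀ v ∈ Vs (i - 1) \ Vs i,
            (({w | (v, w) ∈ F i}.ncard : ℝ) ≤
              C * (Fintype.card V : ℝ) ^ ε * Real.log (Fintype.card V)) ∧
            (∀ w, (v, w) ∈ F i → ∃ A ∈ 𝒞 (i - 1), w ∈ A) ∧
            (∀ w w', (v, w) ∈ F i → (v, w') ∈ F i →
              (∃ A ∈ 𝒞 (i - 1), w ∈ A ∧ w' ∈ A) → w = w') ∧
            (∀ A ∈ 𝒞 (i - 1), (∃ u ∈ A, G.Adj v u) → ∃ w ∈ A, (v, w) ∈ F i)) ∧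
          -- (c)
          (∀ u v : V, G.Adj u v → ∀ i j, 1 ≤ i → i ≤ j → j ≤ κ →
            u ∈ Vs (i - 1) \ Vs i → v ∈ Vs (j - 1) \ Vs j →
            (∃ A ∈ 𝒞 (i - 1), u ∈ A ∧ v ∈ A) ∨
            (∃ w, (u, w) ∈ F i ∧ ∃ A ∈ 𝒞 (i - 1), w ∈ A ∧ v ∈ A)) := by
  classical
  refine ⟨4, by norm_num, ?_⟩
  intro V _ G ε hε hε1 hn
  haveI : Nonempty V := Fintype.card_pos_iff.mp (by omega)
  set n : ℝ := (Fintype.card V : ℝ) with hn'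
  have hn2 : (2:ℝ) ≤ n := by rw [hn']; exact_mod_cast hn
  have hnpos : (0:ℝ) < n := by linarith
  have hlog : (1:ℝ)/3 ≤ Real.log n := log_ge hn
  have hrp : (0:ℝ) < n ^ ε := Real.rpow_pos_of_pos hnpos ε
  set κ := ⌈1/ε⌉₊ with hκdef
  have hκpos : 0 < κ := Nat.ceil_pos.mpr (by positivity)
  have hεκ : 1 ≤ ε * (κ : ℝ) := by
    have h := Nat.le_ceil (1/ε)
    have h' : (1/ε : ℝ) ≤ (κ : ℝ) := by rw [hκdef]; exact_mod_cast h
    calc (1:ℝ) = ε * (1/ε) := by field_simp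
      _ ≤ ε * κ := mul_le_mul_of_nonneg_left h' hε.le
  -- construct the tower of clusterings
  have hstep := step_inv (V := V) G ε hn hε
  choose stepF hInv hsub hrem using hstep
  let f : (i : ℕ) → {P : Set (Set V) // Inv G ε i P} := fun i =>
    Nat.rec (motive := fun i => {P : Set (Set V) // Inv G ε i P})
      ⟨Set.range fun v => ({v} : Set V), base_inv G ε⟩
      (fun j prev => ⟨stepF j prev.1 prev.2, hInv j prev.1 prev.2⟩) i
  have hf0 : (f 0).1 = Set.range (fun v => ({v} : Set V)) := rfl
  have hfs : ∀ i, (f (i+1)).1 = stepF i (f i).1 (f i).2 := fun i => rfl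
  have hsub' : ∀ i, ⋃₀ (f (i+1)).1 ⊆ ⋃₀ (f i).1 := by
    intro i; rw [hfs]; exact hsub _ _ _
  have hrem' : ∀ i, ∀ v ∈ ⋃₀ (f i).1 \ ⋃₀ (f (i+1)).1,
      ({A | A ∈ (f i).1 ∧ ∃ u ∈ A, v = u ∨ G.Adj v u}.ncard : ℝ) ≤
        n ^ ε * (Real.log n + 1) := by
    intro i; rw [hfs]; exact hrem _ _ _
  set Vs : ℕ → Set V := fun i => if i < κ then ⋃₀ (f i).1 else ∅ with hVs
  set 𝒞 : ℕ → Set (Set V) := fun i => (f i).1 with h𝒞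
  set F : ℕ → Set (V × V) := fun i =>
    {p | p.1 ∈ Vs (i-1) \ Vs i ∧ ∃ A ∈ 𝒞 (i-1), (∃ u ∈ A, G.Adj p.1 u) ∧
      p.2 = Classical.epsilon (fun u => u ∈ A ∧ G.Adj p.1 u)} with hF
  have hbase : ⋃₀ (Set.range fun v => ({v} : Set V)) = Set.univ := by
    ext v
    simp only [Set.mem_sUnion, Set.mem_range, Set.mem_univ, iff_true]
    exact ⟨{v}, ⟨v, rfl⟩, rfl⟩
  have hVstep : ∀ m, Vs (m+1) ⊆ Vs m := by
    intro m
    by_cases hm : m + 1 < κ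
    · rw [hVs]
      simp only
      rw [if_pos hm, if_pos (by omega)]
      exact hsub' m
    · rw [hVs]
      simp only
      rw [if_neg hm]
      exact Set.empty_subset _
  have hVmono : ∀ a b : ℕ, a ≤ b → Vs b ⊆ Vs a := by
    intro a b hab
    induction b with
    | zero => rw [Nat.le_zero.mp hab]
    | succ m ih =>
      rcases Nat.lt_or_ge a (m+1) with h | h
      · exact (hVstep m).trans (ih (by omega))
      · rw [Nat.le_antisymm hab h]
  have hVsEq : ∀ i, i < κ → Vs i = ⋃₀ (f i).1 := by
    intro i hi
    rw [hVs]
    simp only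
    rw [if_pos hi]
  -- property (b), proved as a `have` so that (c) can reuse it
  have hb : ∀ i, 1 ≤ i → i ≤ κ → ∀ v ∈ Vs (i - 1) \ Vs i,
      (({w | (v, w) ∈ F i}.ncard : ℝ) ≤ 4 * n ^ ε * Real.log n) ∧
      (∀ w, (v, w) ∈ F i → ∃ A ∈ 𝒞 (i - 1), w ∈ A) ∧
      (∀ w w', (v, w) ∈ F i → (v, w') ∈ F i →
        (∃ A ∈ 𝒞 (i - 1), w ∈ A ∧ w' ∈ A) → w = w') ∧
      (∀ A ∈ 𝒞 (i - 1), (∃ u ∈ A, G.Adj v u) → ∃ w ∈ A, (v, w) ∈ F i) := by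
    intro i h1i hiκ v hv
    have hi1κ : i - 1 < κ := by omega
    obtain ⟨hneP, hdisjP, _, hcardP⟩ := (f (i-1)).2
    refine ⟨?_, ?_, ?_, ?_⟩
    · -- cardinality bound
      have himg : {w | (v, w) ∈ F i} ⊆
          (fun A => Classical.epsilon (fun u => u ∈ A ∧ G.Adj v u)) ''
            {A | A ∈ 𝒞 (i-1) ∧ ∃ u ∈ A, G.Adj v u} := by
        rintro w ⟨_, A, hA, hex, hwe⟩
        have hwe' : w = Classical.epsilon (fun u => u ∈ A ∧ G.Adj v u) := hwe
        exact ⟨A, ⟨hA, hex⟩, hwe'.symm⟩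
      have hcount : ({w | (v, w) ∈ F i}.ncard : ℝ) ≤
          ({A | A ∈ 𝒞 (i-1) ∧ ∃ u ∈ A, G.Adj v u}.ncard : ℝ) := by
        have h1 := Set.ncard_le_ncard himg (Set.toFinite _)
        have h2 := Set.ncard_image_le (f := fun A => Classical.epsilon
          (fun u => u ∈ A ∧ G.Adj v u))
          (s := {A | A ∈ 𝒞 (i-1) ∧ ∃ u ∈ A, G.Adj v u}) (Set.toFinite _)
        exact_mod_cast h1.trans h2
      rcases Nat.lt_or_ge i κ with hiκ' | hiκ'
      · -- intermediate level: use the removal bound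
        have hvmem : v ∈ ⋃₀ (f (i-1)).1 \ ⋃₀ (f i).1 := by
          have e1 : Vs (i-1) = ⋃₀ (f (i-1)).1 := hVsEq _ hi1κ
          have e2 : Vs i = ⋃₀ (f i).1 := hVsEq _ hiκ'
          rw [e1, e2] at hv
          exact hv
        have hi' : i - 1 + 1 = i := by omega
        have hrb := hrem' (i-1) v (by rw [hi']; exact hvmem)
        have hsub2 : {A | A ∈ 𝒞 (i-1) ∧ ∃ u ∈ A, G.Adj v u} ⊆
            {A | A ∈ (f (i-1)).1 ∧ ∃ u ∈ A, v = u ∨ G.Adj v u} := by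
          rintro A ⟨hA, u, hu, hadj⟩
          exact ⟨hA, u, hu, Or.inr hadj⟩
        have h3 : ({A | A ∈ 𝒞 (i-1) ∧ ∃ u ∈ A, G.Adj v u}.ncard : ℝ) ≤
            n ^ ε * (Real.log n + 1) := by
          refine le_trans ?_ hrb
          exact_mod_cast Set.ncard_le_ncard hsub2 (Set.toFinite _)
        have h4 : n ^ ε * (Real.log n + 1) ≤ 4 * n ^ ε * Real.log n := by
          nlinarith
        linarith
      · -- last level: bound by the total number of clusters
        have hiκeq : i = κ := by omega
        have hsub2 : {A | A ∈ 𝒞 (i-1) ∧ ∃ u ∈ A, G.Adj v u} ⊆ (f (i-1)).1 := by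
          rintro A ⟨hA, _⟩
          exact hA
        have h3 : ({A | A ∈ 𝒞 (i-1) ∧ ∃ u ∈ A, G.Adj v u}.ncard : ℝ) ≤
            (((f (i-1)).1.ncard : ℕ) : ℝ) := by
          exact_mod_cast Set.ncard_le_ncard hsub2 (Set.toFinite _)
        have hnκ : n ≤ (n ^ ε) ^ κ := by
          have e : ((n ^ ε) ^ κ : ℝ) = n ^ (ε * (κ:ℝ)) := by
            rw [Real.rpow_mul hnpos.le, Real.rpow_natCast]
          rw [e]
          calc n = n ^ (1:ℝ) := (Real.rpow_one n).symm
            _ ≤ n ^ (ε * (κ:ℝ)) :=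
              Real.rpow_le_rpow_of_exponent_le (by linarith) hεκ
        have hκ1 : i - 1 + 1 = κ := by omega
        have hm : ((f (i-1)).1.ncard : ℝ) ≤ n ^ ε := by
          have hc := hcardP
          have hpow : n ≤ (n ^ ε) ^ (i-1) * n ^ ε := by
            calc n ≤ (n ^ ε) ^ κ := hnκ
              _ = (n ^ ε) ^ (i - 1 + 1) := by rw [hκ1]
              _ = (n ^ ε) ^ (i-1) * n ^ ε := by rw [pow_succ]
          have := hc.trans hpow
          have hppos : (0:ℝ) < (n ^ ε) ^ (i-1) := pow_pos hrp _
          nlinarith [this, hppos]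
        have h5 : (1:ℝ) ≤ 4 * Real.log n := by linarith
        calc ({w | (v, w) ∈ F i}.ncard : ℝ)
            ≤ ((f (i-1)).1.ncard : ℝ) := by
              refine hcount.trans ?_
              exact_mod_cast h3
          _ ≤ n ^ ε := hm
          _ ≤ 4 * n ^ ε * Real.log n := by nlinarith
    · -- each edge goes into a cluster
      rintro w ⟨_, A, hA, hex, hwe⟩
      have hwe' : w = Classical.epsilon (fun u => u ∈ A ∧ G.Adj v u) := hwe
      have hspec := Classical.epsilon_spec
        (p := fun u => u ∈ A ∧ G.Adj v u) hex
      rw [hwe']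
      exact ⟨A, hA, hspec.1⟩
    · -- distinct edges into distinct clusters
      rintro w w' ⟨_, A₁, hA₁, hex₁, hwe₁⟩ ⟨_, A₂, hA₂, hex₂, hwe₂⟩ ⟨A, hA, hwA, hw'A⟩
      have hwe₁' : w = Classical.epsilon (fun u => u ∈ A₁ ∧ G.Adj v u) := hwe₁
      have hwe₂' : w' = Classical.epsilon (fun u => u ∈ A₂ ∧ G.Adj v u) := hwe₂
      have hspec₁ := Classical.epsilon_spec (p := fun u => u ∈ A₁ ∧ G.Adj v u) hex₁
      have hspec₂ := Classical.epsilon_spec (p := fun u => u ∈ A₂ ∧ G.Adj v u) hex₂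
      have hA₁A : A₁ = A := by
        by_contra hne
        exact Set.disjoint_left.mp (hdisjP A₁ hA₁ A hA hne) (hwe₁' ▸ hspec₁.1) hwA
      have hA₂A : A₂ = A := by
        by_contra hne
        exact Set.disjoint_left.mp (hdisjP A₂ hA₂ A hA hne) (hwe₂' ▸ hspec₂.1) hw'A
      rw [hwe₁', hwe₂', hA₁A, hA₂A]
    · -- at least one edge into every neighbouring cluster
      rintro A hA ⟨u, hu, hadj⟩
      have hex : ∃ u', u' ∈ A ∧ G.Adj v u' := ⟨u, hu, hadj⟩
      have hspec := Classical.epsilon_spec (p := fun u' => u' ∈ A ∧ G.Adj v u') hex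
      exact ⟨Classical.epsilon (fun u' => u' ∈ A ∧ G.Adj v u'), hspec.1,
        hv, A, hA, hex, rfl⟩
  refine ⟨κ, Vs, 𝒞, F, rfl, ?_, ?_, ?_, ?_, ?_, ?_, ?_, ?_⟩
  · -- Vs 0 = univ
    rw [hVs]
    simp only
    rw [if_pos hκpos, hf0, hbase]
  · -- Vs κ = ∅
    rw [hVs]
    simp only
    rw [if_neg (lt_irrefl κ)]
  · -- nested
    intro i hi
    exact hVstep i
  · -- partitions
    intro i hi
    obtain ⟨h1, h2, _, _⟩ := (f i).2
    exact ⟨h1, h2, (hVsEq i hi).symm⟩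
  · -- F consists of oriented edges
    rintro i h1i hiκ v w ⟨hvL, A, hA, hex, hwe⟩
    refine ⟨hvL, ?_⟩
    have hwe' : w = Classical.epsilon (fun u => u ∈ A ∧ G.Adj v u) := hwe
    have hspec := Classical.epsilon_spec (p := fun u => u ∈ A ∧ G.Adj v u) hex
    rw [hwe']
    exact hspec.2
  · -- (a) strong radius
    intro i hi A hA
    exact ((f i).2).2.2.1 A hA
  · -- (b)
    exact hb
  · -- (c)
    intro u v hadj i j h1i hij hjκ hu hv
    have hvi : v ∈ Vs (i - 1) := hVmono (i-1) (j-1) (by omega) hv.1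
    have hi1κ : i - 1 < κ := by omega
    rw [hVsEq _ hi1κ] at hvi
    obtain ⟨B, hB, hvB⟩ := hvi
    have hex : ∃ u', u' ∈ B ∧ G.Adj u u' := ⟨v, hvB, hadj⟩
    have hspec := Classical.epsilon_spec (p := fun u' => u' ∈ B ∧ G.Adj u u') hex
    exact Or.inr ⟨Classical.epsilon (fun u' => u' ∈ B ∧ G.Adj u u'),
      ⟨hu, B, hB, hex, rfl⟩, B, hB, hspec.1, hvB⟩
end

section
/- There is a universal constant C > 0 such that for every finite simple graph G on n ≥ 2 vertices and every integer κ ≥ 1, there exists a spanning subgraph H of G with at most C·κ·n^{1+1/κ}·log n edges such that for every edge {u, v} of G there is a walk in H from u to v of length at most 2κ − 1 (equivalently, H is a (2κ−1)-spanner of G: dist_H(u,v) ≤ (2κ−1)·dist_G(u,v) for all u, v in the same connected component of G). -/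
open Classical

namespace BSAux

variable {V : Type} [DecidableEq V] (G : SimpleGraph V) (S : Finset V) (c : V)

noncomputable def ball : ℕ → Finset V
  | 0 => {c}
  | (k+1) => ball k ∪ S.filter (fun x => ∃ y ∈ ball k, G.Adj y x)

lemma ball_subset (hc : c ∈ S) : ∀ k, ball G S c k ⊆ S
  | 0 => by simpa [ball] using hc
  | (k+1) => by
      simp only [ball]
      exact Finset.union_subset (ball_subset hc k) (Finset.filter_subset _ _)

lemma ball_mono_succ (k : ℕ) : ball G S c k ⊆ ball G S c (k+1) := by
  simp only [ball]; exact Finset.subset_union_left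

lemma ball_mono {k l : ℕ} (h : k ≤ l) : ball G S c k ⊆ ball G S c l := by
  induction h with
  | refl => exact subset_rfl
  | step _ ih => exact ih.trans (ball_mono_succ _ _ _ _)

lemma center_mem_ball (k : ℕ) : c ∈ ball G S c k :=
  ball_mono G S c (Nat.zero_le k) (by simp [ball])

lemma mem_ball_succ {x : V} {k : ℕ} (hx : x ∈ ball G S c (k+1)) :
    x ∈ ball G S c k ∨ (x ∈ S ∧ ∃ y ∈ ball G S c k, G.Adj y x) := by
  simp only [ball, Finset.mem_union, Finset.mem_filter] at hx
  tauto

lemma adj_mem_ball {x y : V} {k : ℕ} (hx : x ∈ S) (hy : y ∈ ball G S c k)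
    (hadj : G.Adj y x) : x ∈ ball G S c (k+1) := by
  simp only [ball, Finset.mem_union, Finset.mem_filter]
  exact Or.inr ⟨hx, y, hy, hadj⟩

noncomputable def par (k : ℕ) (x : V) : V :=
  if h : ∃ y ∈ ball G S c k, G.Adj y x then h.choose else x

lemma par_spec {k : ℕ} {x : V} (hx : x ∈ ball G S c (k+1)) (hx' : x ∉ ball G S c k) :
    par G S c k x ∈ ball G S c k ∧ G.Adj (par G S c k x) x := by
  rcases mem_ball_succ G S c hx with h | ⟨_, h⟩
  · exact absurd h hx'
  · rw [par, dif_pos h]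
    exact ⟨h.choose_spec.1, h.choose_spec.2⟩

noncomputable def pedges (k : ℕ) : Finset (Sym2 V) :=
  (ball G S c (k+1) \ ball G S c k).image (fun x => s(par G S c k x, x))

noncomputable def clusterEdges (m : ℕ) : Finset (Sym2 V) :=
  (Finset.range m).biUnion (pedges G S c)

lemma pedges_subset (k : ℕ) : (pedges G S c k : Set (Sym2 V)) ⊆ G.edgeSet := by
  intro e he
  simp only [pedges, Finset.coe_image, Set.mem_image, Finset.mem_coe,
    Finset.mem_sdiff] at he
  obtain ⟨x, ⟨hx1, hx2⟩, rfl⟩ := he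
  exact (par_spec G S c hx1 hx2).2

lemma pedges_card (k : ℕ) :
    (pedges G S c k).card + (ball G S c k).card ≤ (ball G S c (k+1)).card := by
  have h1 : (pedges G S c k).card ≤ (ball G S c (k+1) \ ball G S c k).card :=
    Finset.card_image_le
  have h2 := Finset.card_sdiff_add_card_eq_card (ball_mono_succ G S c k)
  omega

lemma clusterEdges_subset (m : ℕ) :
    (clusterEdges G S c m : Set (Sym2 V)) ⊆ G.edgeSet := by
  intro e he
  simp only [clusterEdges, Finset.coe_biUnion, Set.mem_iUnion, Finset.mem_coe,
    Finset.mem_range] at he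
  obtain ⟨k, _, hk⟩ := he
  exact pedges_subset G S c k hk

lemma clusterEdges_card (m : ℕ) :
    (clusterEdges G S c m).card + 1 ≤ (ball G S c m).card := by
  induction m with
  | zero => simp [clusterEdges, ball]
  | succ m ih =>
      have h1 : clusterEdges G S c (m+1) ⊆ pedges G S c m ∪ clusterEdges G S c m := by
        simp only [clusterEdges, Finset.range_add_one, Finset.biUnion_insert]
        exact subset_rfl
      have h2 := Finset.card_le_card h1
      have h3 := Finset.card_union_le (pedges G S c m) (clusterEdges G S c m)
      have h4 := pedges_card G S c m
      omega

lemma ball_walk (m : ℕ) :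
    ∀ k, k ≤ m → ∀ x ∈ ball G S c k,
      ∃ p : (SimpleGraph.fromEdgeSet (clusterEdges G S c m : Set (Sym2 V))).Walk x c,
        p.length ≤ k := by
  intro k
  induction k with
  | zero =>
      intro _ x hx
      simp only [ball, Finset.mem_singleton] at hx
      subst hx
      exact ⟨SimpleGraph.Walk.nil, by simp⟩
  | succ k ih =>
      intro hkm x hx
      by_cases hxk : x ∈ ball G S c k
      · obtain ⟨p, hp⟩ := ih (Nat.le_of_succ_le hkm) x hxk
        exact ⟨p, hp.trans (Nat.le_succ k)⟩
      · obtain ⟨hy1, hy2⟩ := par_spec G S c hx hxk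
        set y := par G S c k x with hy
        have hedge : s(y, x) ∈ clusterEdges G S c m := by
          apply Finset.mem_biUnion.2
          refine ⟨k, Finset.mem_range.2 (by omega), ?_⟩
          exact Finset.mem_image.2 ⟨x, Finset.mem_sdiff.2 ⟨hx, hxk⟩, rfl⟩
        have hne : x ≠ y := fun h => hxk (h ▸ hy1)
        have hadj : (SimpleGraph.fromEdgeSet
            (clusterEdges G S c m : Set (Sym2 V))).Adj x y := by
          rw [SimpleGraph.fromEdgeSet_adj]
          exact ⟨by rwa [Sym2.eq_swap], hne⟩
        obtain ⟨p, hp⟩ := ih (Nat.le_of_succ_le hkm) y hy1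
        exact ⟨SimpleGraph.Walk.cons hadj p, by simpa using Nat.succ_le_succ hp⟩

lemma exists_good_radius [Fintype V] (hc : c ∈ S) (κ : ℕ) (hκ : 1 ≤ κ) (t : ℝ)
    (ht : 1 ≤ t) (hn : (Fintype.card V : ℝ) ≤ t ^ κ) :
    ∃ r < κ, ((ball G S c (r+1)).card : ℝ) ≤ t * (ball G S c r).card := by
  by_contra hcon
  push_neg at hcon
  have ht0 : (0:ℝ) < t := lt_of_lt_of_le one_pos ht
  have key : ∀ k, 1 ≤ k → k ≤ κ → t ^ k < ((ball G S c k).card : ℝ) := by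
    intro k
    induction k with
    | zero => omega
    | succ k ih =>
        intro _ hkκ
        rcases Nat.eq_or_lt_of_le (Nat.one_le_iff_ne_zero.2 (Nat.succ_ne_zero k)) with h1 | h1
        · have h0 : ((ball G S c 0).card : ℝ) = 1 := by simp [ball]
          have := hcon 0 (by omega)
          rw [h0, mul_one] at this
          have hk0 : k = 0 := by omega
          subst hk0
          simpa using this
        · have hk1 : 1 ≤ k := by omega
          have hkk : k ≤ κ := by omega
          have h2 := ih hk1 hkk
          have h3 := hcon k (by omega)
          calc t ^ (k+1) = t * t ^ k := by ring
            _ < t * ((ball G S c k).card : ℝ) := by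
                exact mul_lt_mul_of_pos_left h2 ht0
            _ < ((ball G S c (k+1)).card : ℝ) := h3
  have h4 := key κ hκ le_rfl
  have h5 : ((ball G S c κ).card : ℝ) ≤ (Fintype.card V : ℝ) := by
    exact_mod_cast Finset.card_le_univ _
  linarith

lemma main [Fintype V] (G : SimpleGraph V) (κ : ℕ) (hκ : 1 ≤ κ) (t : ℝ)
    (ht : 1 ≤ t) (hn : (Fintype.card V : ℝ) ≤ t ^ κ) (S : Finset V) :
    ∃ E : Finset (Sym2 V), (E : Set (Sym2 V)) ⊆ G.edgeSet ∧
      (E.card : ℝ) ≤ t * S.card ∧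
      ∀ u v : V, G.Adj u v → u ∈ S → v ∈ S →
        ∃ p : (SimpleGraph.fromEdgeSet (E : Set (Sym2 V))).Walk u v,
          p.length ≤ 2 * κ - 1 := by
  induction S using Finset.strongInductionOn with
  | _ S ih =>
  rcases S.eq_empty_or_nonempty with rfl | ⟨c, hc⟩
  · exact ⟨∅, by simp, by simp, fun u v _ hu _ => absurd hu (by simp)⟩
  obtain ⟨r, hrκ, hball⟩ := exists_good_radius G S c hc κ hκ t ht hn
  set Cl := ball G S c r with hCl
  set Ec := clusterEdges G S c (r+1) with hEc
  set S' := S \ Cl with hS'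
  have hClS : Cl ⊆ S := ball_subset G S c hc r
  have hss : S' ⊂ S := by
    refine Finset.ssubset_iff_of_subset Finset.sdiff_subset |>.2 ?_
    refine ⟨c, hc, ?_⟩
    simp only [hS', Finset.mem_sdiff, not_and, not_not]
    exact fun _ => center_mem_ball G S c r
  obtain ⟨E', hE'sub, hE'card, hE'walk⟩ := ih S' hss
  refine ⟨E' ∪ Ec, ?_, ?_, ?_⟩
  · rw [Finset.coe_union]
    exact Set.union_subset hE'sub (clusterEdges_subset G S c (r+1))
  · have h1 : ((E' ∪ Ec).card : ℝ) ≤ (E'.card : ℝ) + (Ec.card : ℝ) := by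
      exact_mod_cast Finset.card_union_le E' Ec
    have h2 : (Ec.card : ℝ) + 1 ≤ ((ball G S c (r+1)).card : ℝ) := by
      exact_mod_cast clusterEdges_card G S c (r+1)
    have h3 : (S'.card : ℝ) + (Cl.card : ℝ) = (S.card : ℝ) := by
      exact_mod_cast Finset.card_sdiff_add_card_eq_card hClS
    have ht0 : (0:ℝ) < t := lt_of_lt_of_le one_pos ht
    nlinarith [hball, hE'card]
  · intro u v hadj hu hv
    have lift : ∀ (F : Finset (Sym2 V)), F ⊆ E' ∪ Ec → ∀ (a b : V)
        (p : (SimpleGraph.fromEdgeSet (F : Set (Sym2 V))).Walk a b),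
        ∃ q : (SimpleGraph.fromEdgeSet ((E' ∪ Ec : Finset (Sym2 V)) : Set (Sym2 V))).Walk a b,
          q.length = p.length := by
      intro F hF a b p
      refine ⟨p.mapLe (SimpleGraph.fromEdgeSet_mono ?_), by simp⟩
      exact_mod_cast hF
    have build : ∀ a b : V, a ∈ ball G S c (r+1) → b ∈ Cl →
        ∃ q : (SimpleGraph.fromEdgeSet ((E' ∪ Ec : Finset (Sym2 V)) : Set (Sym2 V))).Walk a b,
          q.length ≤ 2 * κ - 1 := by
      intro a b ha hb
      obtain ⟨pa, hpa⟩ := ball_walk G S c (r+1) (r+1) le_rfl a ha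
      obtain ⟨pb, hpb⟩ := ball_walk G S c (r+1) r (Nat.le_succ r) b hb
      obtain ⟨q, hq⟩ := lift Ec Finset.subset_union_right a b (pa.append pb.reverse)
      refine ⟨q, ?_⟩
      rw [hq]
      simp only [SimpleGraph.Walk.length_append, SimpleGraph.Walk.length_reverse]
      omega
    by_cases hvC : v ∈ Cl
    · have huB : u ∈ ball G S c (r+1) := adj_mem_ball G S c hu hvC hadj.symm
      exact build u v huB hvC
    by_cases huC : u ∈ Cl
    · have hvB : v ∈ ball G S c (r+1) := adj_mem_ball G S c hv huC hadj
      obtain ⟨q, hq⟩ := build v u hvB huC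
      exact ⟨q.reverse, by simpa using hq⟩
    · obtain ⟨p, hp⟩ := hE'walk u v hadj (Finset.mem_sdiff.2 ⟨hu, huC⟩)
        (Finset.mem_sdiff.2 ⟨hv, hvC⟩)
      obtain ⟨q, hq⟩ := lift E' Finset.subset_union_left u v p
      exact ⟨q, by omega⟩

end BSAux

/-- **Baswana–Sen spanner guarantee.** There is a universal constant `C > 0` such that every
finite simple graph `G` on `n ≥ 2` vertices and every integer `κ ≥ 1` admit a spanning
subgraph `H ≤ G` with at most `C·κ·n^{1+1/κ}·log n` edges such that every edge `{u,v}` of `G`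
is stretched to a walk in `H` of length at most `2κ - 1` (i.e. `H` is a `(2κ-1)`-spanner). -/
theorem baswana_sen_spanner_exists :
    ∃ C : ℝ, 0 < C ∧
      ∀ (V : Type) [Fintype V] (G : SimpleGraph V),
        2 ≤ Fintype.card V →
        ∀ κ : ℕ, 1 ≤ κ →
        ∃ H : SimpleGraph V, H ≤ G ∧
          ((H.edgeSet.ncard : ℝ) ≤
            C * κ * (Fintype.card V : ℝ) ^ ((1 : ℝ) + 1 / κ) * Real.log (Fintype.card V)) ∧
          (∀ u v : V, G.Adj u v → ∃ p : H.Walk u v, p.length ≤ 2 * κ - 1) := by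
  refine ⟨2, two_pos, ?_⟩
  intro V _ G hn2 κ hκ
  letI : DecidableEq V := Classical.decEq V
  set n : ℕ := Fintype.card V with hn
  have hn0 : (0:ℝ) < (n:ℝ) := by positivity
  have hn1 : (1:ℝ) ≤ (n:ℝ) := by exact_mod_cast (by omega : 1 ≤ n)
  have hκ0 : (κ:ℝ) ≠ 0 := by exact_mod_cast Nat.one_le_iff_ne_zero.1 hκ
  set t : ℝ := (n:ℝ) ^ ((1:ℝ)/κ) with htdef
  have ht : 1 ≤ t := Real.one_le_rpow hn1 (by positivity)
  have htκ : (n:ℝ) ≤ t ^ κ := by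
    rw [htdef, ← Real.rpow_natCast ((n:ℝ) ^ ((1:ℝ)/κ)) κ, ← Real.rpow_mul (le_of_lt hn0)]
    rw [one_div, inv_mul_cancel₀ (by exact_mod_cast hκ0), Real.rpow_one]
  obtain ⟨E, hEsub, hEcard, hEwalk⟩ :=
    BSAux.main G κ hκ t ht htκ (Finset.univ : Finset V)
  refine ⟨SimpleGraph.fromEdgeSet (E : Set (Sym2 V)), ?_, ?_, ?_⟩
  · have := SimpleGraph.fromEdgeSet_mono hEsub
    rwa [SimpleGraph.fromEdgeSet_edgeSet] at this
  · have h1 : ((SimpleGraph.fromEdgeSet (E : Set (Sym2 V))).edgeSet.ncard : ℝ) ≤ E.card := by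
      have hsub : (SimpleGraph.fromEdgeSet (E : Set (Sym2 V))).edgeSet ⊆ (E : Set (Sym2 V)) := by
        rw [SimpleGraph.edgeSet_fromEdgeSet]
        exact Set.diff_subset
      have := Set.ncard_le_ncard hsub E.finite_toSet
      rw [Set.ncard_coe_finset] at this
      exact_mod_cast this
    have h2 : (E.card : ℝ) ≤ t * n := by
      simpa using hEcard
    have h3 : t * (n:ℝ) = (n:ℝ) ^ ((1:ℝ) + 1/κ) := by
      rw [htdef, Real.rpow_add hn0, Real.rpow_one, one_div, mul_comm]
    have hlog : (1:ℝ)/2 ≤ Real.log n := by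
      have h4 : Real.log 2 ≤ Real.log n := by
        apply Real.log_le_log (by norm_num)
        exact_mod_cast hn2
      have := Real.log_two_gt_d9
      linarith
    have hκ1 : (1:ℝ) ≤ (κ:ℝ) := by exact_mod_cast hκ
    have hpow : (0:ℝ) < (n:ℝ) ^ ((1:ℝ) + 1/κ) := Real.rpow_pos_of_pos hn0 _
    calc ((SimpleGraph.fromEdgeSet (E : Set (Sym2 V))).edgeSet.ncard : ℝ)
        ≤ t * n := le_trans h1 h2
      _ = (n:ℝ) ^ ((1:ℝ) + 1/κ) := h3
      _ ≤ 2 * κ * (n:ℝ) ^ ((1:ℝ) + 1/κ) * Real.log n := by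
          have hfac : (1:ℝ) ≤ 2 * κ * Real.log n := by nlinarith
          nlinarith [mul_le_mul_of_nonneg_right hfac hpow.le]
  · intro u v hadj
    exact hEwalk u v hadj (Finset.mem_univ u) (Finset.mem_univ v)
end

section
/- Let T be a finite tree on n ≥ 1 vertices with a designated root r, and let s ≥ 1 be an integer. Say that u is a descendant of v in (T, r) if v lies on the unique path in T from u to r. Then there exists a partition 𝒫 of V(T) into at most ⌊n/s⌋ + 1 parts such that: (i) each part B ∈ 𝒫 induces a connected subgraph of T; and (ii) for each part B ∈ 𝒫, letting b be the unique vertex of B at minimum distance from r, every vertex u ∈ B with u ≠ b has fewer than s descendants inside B (i.e., |{ w ∈ B : w is a descendant of u }| < s). -/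
open SimpleGraph

section helpers

variable {V : Type} (T : SimpleGraph V) (r : V)

/-- Transitivity of the distance-based ancestor relation. -/
lemma dAnc_trans (hc : T.Connected) {u v w : V}
    (h1 : T.dist r u + T.dist u v = T.dist r v)
    (h2 : T.dist r v + T.dist v w = T.dist r w) :
    T.dist r u + T.dist u w = T.dist r w := by
  have t1 : T.dist u w ≤ T.dist u v + T.dist v w := hc.dist_triangle
  have t2 : T.dist r w ≤ T.dist r u + T.dist u w := hc.dist_triangle
  omega

/-- The walk-based ancestor relation coincides with the distance-based one in a tree. -/
lemma anc_iff (hT : T.IsTree) (u w : V) :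
    (∀ p : T.Walk w r, p.IsPath → u ∈ p.support) ↔
      T.dist r u + T.dist u w = T.dist r w := by
  classical
  have hc := hT.isConnected
  constructor
  · intro h
    obtain ⟨p, hp, hlen⟩ := hc.exists_path_of_dist w r
    have hu := h p hp
    have hspec := congrArg Walk.length (p.take_spec hu)
    rw [Walk.length_append] at hspec
    have d1 : T.dist w u ≤ (p.takeUntil u hu).length := dist_le _
    have d2 : T.dist u r ≤ (p.dropUntil u hu).length := dist_le _
    have t : T.dist w r ≤ T.dist w u + T.dist u r := hc.dist_triangle
    have c1 : T.dist r u = T.dist u r := dist_comm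
    have c2 : T.dist u w = T.dist w u := dist_comm
    have c3 : T.dist r w = T.dist w r := dist_comm
    omega
  · intro h p hp
    obtain ⟨q1, _, l1⟩ := hc.exists_path_of_dist w u
    obtain ⟨q2, _, l2⟩ := hc.exists_path_of_dist u r
    have hql : (q1.append q2).length = T.dist w r := by
      have c1 : T.dist r u = T.dist u r := dist_comm
      have c2 : T.dist u w = T.dist w u := dist_comm
      have c3 : T.dist r w = T.dist w r := dist_comm
      rw [Walk.length_append, l1, l2]
      omega
    have hq : (q1.append q2).IsPath := Walk.isPath_of_length_eq_dist _ hql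
    obtain ⟨pp, -, huniq⟩ := hT.existsUnique_path w r
    have e1 : p = pp := huniq p hp
    have e2 : q1.append q2 = pp := huniq _ hq
    rw [e1, ← e2, Walk.mem_support_append_iff]
    exact Or.inr q2.start_mem_support

/-- Transfer a walk with support inside `S` to reachability in the induced graph. -/
lemma reach_induce {S : Set V} :
    ∀ {x y : V} (p : T.Walk x y), (∀ v ∈ p.support, v ∈ S) →
      ∀ (hx : x ∈ S) (hy : y ∈ S), (T.induce S).Reachable ⟨x, hx⟩ ⟨y, hy⟩ := by
  intro x y p
  induction p with
  | nil => intro _ hx hy; exact Reachable.refl _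
  | @cons a c y' had q ih =>
    intro h hx hy
    have hcS : c ∈ S := h c (by simp)
    have hadj : (T.induce S).Adj ⟨a, hx⟩ ⟨c, hcS⟩ := had
    exact hadj.reachable.trans (ih (fun v hv => h v (by simp [hv])) hcS hy)

/-- The set of descendants of `b` inside an ancestor-closed set induces a connected graph. -/
lemma conn_part (hT : T.IsTree) (A : Finset V)
    (hAcl : ∀ w ∈ A, ∀ v, T.dist r v + T.dist v w = T.dist r w → v ∈ A)
    (b : V) (hb : b ∈ A) :
    (T.induce {w : V | w ∈ A ∧ T.dist r b + T.dist b w = T.dist r w}).Connected := by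
  classical
  have hc := hT.isConnected
  set S : Set V := {w : V | w ∈ A ∧ T.dist r b + T.dist b w = T.dist r w} with hS
  have hbS : b ∈ S := ⟨hb, by simp [SimpleGraph.dist_self]⟩
  have key : ∀ z (hz : z ∈ S), (T.induce S).Reachable ⟨z, hz⟩ ⟨b, hbS⟩ := by
    intro z hz
    obtain ⟨p, -, hlen⟩ := hc.exists_path_of_dist z b
    have hsupp : ∀ v ∈ p.support, v ∈ S := by
      intro v hv
      have hspec := congrArg Walk.length (p.take_spec hv)
      rw [Walk.length_append] at hspec
      have d1 : T.dist z v ≤ (p.takeUntil v hv).length := dist_le _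
      have d2 : T.dist v b ≤ (p.dropUntil v hv).length := dist_le _
      have t : T.dist z b ≤ T.dist z v + T.dist v b := hc.dist_triangle
      have e : T.dist z v + T.dist v b = T.dist z b := by omega
      have hz2 := hz.2
      have t1 : T.dist r v ≤ T.dist r b + T.dist b v := hc.dist_triangle
      have t2 : T.dist r z ≤ T.dist r v + T.dist v z := hc.dist_triangle
      have c1 : T.dist b z = T.dist z b := dist_comm
      have c2 : T.dist b v = T.dist v b := dist_comm
      have c3 : T.dist v z = T.dist z v := dist_comm
      have hvz : T.dist r v + T.dist v z = T.dist r z := by omega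
      exact ⟨hAcl z hz.1 v hvz, by omega⟩
    exact reach_induce T p hsupp hz hbS
  have hne : Nonempty {w // w ∈ S} := ⟨⟨b, hbS⟩⟩
  refine ⟨?_⟩
  rintro ⟨x, hx⟩ ⟨y, hy⟩
  exact (key x hx).trans (key y hy).symm

variable [Fintype V]

/-- Main induction: any ancestor-closed set containing the root can be pruned. -/
lemma main_prune (hT : T.IsTree) (s : ℕ) (hs : 1 ≤ s) :
    ∀ n (A : Finset V), A.card ≤ n → r ∈ A →
      (∀ w ∈ A, ∀ v, T.dist r v + T.dist v w = T.dist r w → v ∈ A) →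
      ∃ (k : ℕ) (B : Fin k → Set V),
        (k - 1) * s < A.card ∧
        (∀ i j, i ≠ j → Disjoint (B i) (B j)) ∧
        (⋃ i, B i) = ↑A ∧
        (∀ i, (T.induce (B i)).Connected) ∧
        (∀ i, ∃ b ∈ B i,
          (∀ u ∈ B i, u ≠ b → T.dist r b < T.dist r u) ∧
          (∀ u ∈ B i, u ≠ b →
            ({w ∈ B i | ∀ p : T.Walk w r, p.IsPath → u ∈ p.support}.ncard) < s)) := by
  classical
  have hc := hT.isConnected
  intro n
  induction n with
  | zero =>
    intro A hcard hr _
    exact absurd (Finset.card_pos.mpr ⟨r, hr⟩) (by omega)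
  | succ n ih =>
    intro A hcard hrA hAcl
    by_cases hex : ∃ u ∈ A, u ≠ r ∧
        s ≤ (A.filter (fun w => T.dist r u + T.dist u w = T.dist r w)).card
    · -- cut off a deepest heavy subtree
      obtain ⟨u, huC, hmax⟩ := Finset.exists_max_image
        (A.filter (fun u => u ≠ r ∧
          s ≤ (A.filter (fun w => T.dist r u + T.dist u w = T.dist r w)).card))
        (fun u => T.dist r u)
        (by obtain ⟨u, h1, h2, h3⟩ := hex; exact ⟨u, Finset.mem_filter.mpr ⟨h1, h2, h3⟩⟩)
      rw [Finset.mem_filter] at huC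
      obtain ⟨huA, hur, hD⟩ := huC
      set D := A.filter (fun w => T.dist r u + T.dist u w = T.dist r w) with hDdef
      have huD : u ∈ D := Finset.mem_filter.mpr ⟨huA, by simp [SimpleGraph.dist_self]⟩
      set A' := A \ D with hA'def
      have hrA' : r ∈ A' := by
        rw [hA'def, Finset.mem_sdiff]
        refine ⟨hrA, fun hrD => ?_⟩
        rw [Finset.mem_filter] at hrD
        have h0 : T.dist r r = 0 := SimpleGraph.dist_self
        have h1 : T.dist r u = 0 := by omega
        have h2 : r = u := hc.dist_eq_zero_iff.mp h1
        exact hur h2.symm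
      have hA'cl : ∀ w ∈ A', ∀ v, T.dist r v + T.dist v w = T.dist r w → v ∈ A' := by
        intro w hw v hv
        rw [hA'def, Finset.mem_sdiff] at hw ⊢
        refine ⟨hAcl w hw.1 v hv, fun hvD => ?_⟩
        rw [Finset.mem_filter] at hvD
        exact hw.2 (Finset.mem_filter.mpr ⟨hw.1, dAnc_trans T r hc hvD.2 hv⟩)
      have hDsub : D ⊆ A := Finset.filter_subset _ _
      have hA'card : A'.card = A.card - D.card := Finset.card_sdiff_of_subset hDsub
      have hDA : D.card ≤ A.card := Finset.card_le_card hDsub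
      obtain ⟨k', B', hk', hdisj', hunion', hconn', hapex'⟩ :=
        ih A' (by omega) hrA' hA'cl
      refine ⟨k' + 1, Fin.cons (↑D) B', ?_, ?_, ?_, ?_, ?_⟩
      · have aux : k' * s ≤ (k' - 1) * s + s := by
          cases k' with
          | zero => simp
          | succ m => rw [Nat.add_sub_cancel, Nat.add_mul, one_mul]
        simp only [Nat.add_sub_cancel]
        omega
      · -- disjointness
        have hsub' : ∀ j, B' j ⊆ ↑A' := by
          intro j x hx
          have : x ∈ ⋃ i, B' i := Set.mem_iUnion.mpr ⟨j, hx⟩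
          rwa [hunion'] at this
        have hDdisj : ∀ j, Disjoint (↑D : Set V) (B' j) := by
          intro j
          rw [Set.disjoint_left]
          intro x hxD hxB
          have hmem := hsub' j hxB
          rw [hA'def, Finset.coe_sdiff] at hmem
          exact hmem.2 hxD
        intro i j hij
        obtain rfl | ⟨i', rfl⟩ := Fin.eq_zero_or_eq_succ i <;>
          obtain rfl | ⟨j', rfl⟩ := Fin.eq_zero_or_eq_succ j
        · exact absurd rfl hij
        · simpa using hDdisj j'
        · simpa using (hDdisj i').symm
        · simp only [Fin.cons_succ]
          exact hdisj' i' j' (fun h => hij (by rw [h]))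
      · -- union
        ext x
        simp only [Set.mem_iUnion, Fin.exists_fin_succ, Fin.cons_zero, Fin.cons_succ,
          Finset.mem_coe]
        have hx' : (∃ i', x ∈ B' i') ↔ x ∈ (↑A' : Set V) := by
          rw [← Set.mem_iUnion, hunion']
        rw [hx', Finset.mem_coe, hA'def, Finset.mem_sdiff]
        constructor
        · rintro (h | ⟨h, -⟩)
          · exact hDsub h
          · exact h
        · intro hxA
          by_cases hxD : x ∈ D
          · exact Or.inl hxD
          · exact Or.inr ⟨hxA, hxD⟩
      · -- connectivity
        intro i
        obtain rfl | ⟨i', rfl⟩ := Fin.eq_zero_or_eq_succ i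
        · have : (↑D : Set V) =
              {w : V | w ∈ A ∧ T.dist r u + T.dist u w = T.dist r w} := by
            ext w; simp [hDdef, Finset.mem_filter]
          rw [Fin.cons_zero, this]
          exact conn_part T r hT A hAcl u huA
        · rw [Fin.cons_succ]; exact hconn' i'
      · -- apex
        intro i
        obtain rfl | ⟨i', rfl⟩ := Fin.eq_zero_or_eq_succ i
        · refine ⟨u, by simp [huD], ?_, ?_⟩
          · intro w hw hwu
            rw [Fin.cons_zero, Finset.mem_coe, hDdef, Finset.mem_filter] at hw
            have : 0 < T.dist u w := hc.pos_dist_of_ne (fun h => hwu h.symm)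
            omega
          · intro w hw hwu
            rw [Fin.cons_zero, Finset.mem_coe, hDdef, Finset.mem_filter] at hw
            have hwr : w ≠ r := by
              intro h
              rw [h] at hw
              have h0 : T.dist r r = 0 := SimpleGraph.dist_self
              have h1 : T.dist r u = 0 := by omega
              have h2 : r = u := hc.dist_eq_zero_iff.mp h1
              exact hur h2.symm
            have hset : {x ∈ (Fin.cons (↑D) B' : Fin (k'+1) → Set V) 0 |
                ∀ p : T.Walk x r, p.IsPath → w ∈ p.support} =
                ↑(A.filter (fun x => T.dist r w + T.dist w x = T.dist r x)) := by
              ext x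
              simp only [Fin.cons_zero, Set.mem_setOf_eq, Set.mem_sep_iff,
                Finset.coe_filter, Finset.mem_coe, hDdef, Finset.mem_filter,
                anc_iff T r hT]
              constructor
              · rintro ⟨⟨hxA, _⟩, hwx⟩; exact ⟨hxA, hwx⟩
              · rintro ⟨hxA, hwx⟩
                exact ⟨⟨hxA, dAnc_trans T r hc hw.2 hwx⟩, hwx⟩
            rw [hset, Set.ncard_coe_finset]
            by_contra hge
            push_neg at hge
            have hwC : w ∈ A.filter (fun u => u ≠ r ∧
                s ≤ (A.filter (fun x => T.dist r u + T.dist u x = T.dist r x)).card) :=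
              Finset.mem_filter.mpr ⟨hw.1, hwr, hge⟩
            have hle := hmax w hwC
            have hpos : 0 < T.dist u w := hc.pos_dist_of_ne (fun h => hwu h.symm)
            omega
        · rw [Fin.cons_succ]; exact hapex' i'
    · -- no heavy vertex: one part
      push_neg at hex
      refine ⟨1, fun _ => ↑A, by simpa using Finset.card_pos.mpr ⟨r, hrA⟩,
        fun i j hij => absurd (Subsingleton.elim i j) hij, Set.iUnion_const _, ?_, ?_⟩
      · intro _
        have : (↑A : Set V) =
            {w : V | w ∈ A ∧ T.dist r r + T.dist r w = T.dist r w} := by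
          ext w; simp [SimpleGraph.dist_self]
        rw [this]
        exact conn_part T r hT A hAcl r hrA
      · intro _
        refine ⟨r, hrA, ?_, ?_⟩
        · intro w hw hwr
          have h0 : T.dist r r = 0 := SimpleGraph.dist_self
          have : 0 < T.dist r w := hc.pos_dist_of_ne (fun h => hwr h.symm)
          omega
        · intro w hw hwr
          have hset : {x ∈ (↑A : Set V) |
              ∀ p : T.Walk x r, p.IsPath → w ∈ p.support} =
              ↑(A.filter (fun x => T.dist r w + T.dist w x = T.dist r x)) := by
            ext x
            simp [Set.mem_sep_iff, anc_iff T r hT, Finset.mem_filter]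
          rw [hset, Set.ncard_coe_finset]
          exact hex w hw hwr
end helpers

/-- **Pruning a rooted cluster tree.** Every finite tree `T` on `n ≥ 1` vertices with root `r`
and every integer `s ≥ 1` admit a partition of the vertex set into at most `⌊n/s⌋ + 1` parts,
each inducing a connected subgraph (a subtree), such that in every part `B`, letting `b` be
the unique vertex of `B` closest to the root `r`, every vertex `u ∈ B`, `u ≠ b`, has fewer
than `s` descendants inside `B` (where `w` is a descendant of `u` iff `u` lies on the unique
path in `T` from `w` to `r`). -/
theorem tree_pruning :
    ∀ (V : Type) [Fintype V] (T : SimpleGraph V) (r : V), T.IsTree →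
      ∀ s : ℕ, 1 ≤ s →
      ∃ (k : ℕ) (B : Fin k → Set V),
        k ≤ Fintype.card V / s + 1 ∧
        (∀ i j, i ≠ j → Disjoint (B i) (B j)) ∧
        (⋃ i, B i) = Set.univ ∧
        (∀ i, (T.induce (B i)).Connected) ∧
        (∀ i, ∃ b ∈ B i,
          (∀ u ∈ B i, u ≠ b → T.dist r b < T.dist r u) ∧
          (∀ u ∈ B i, u ≠ b →
            ({w ∈ B i | ∀ p : T.Walk w r, p.IsPath → u ∈ p.support}.ncard) < s)) := by
  intro V _ T r hT s hs
  classical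
  obtain ⟨k, B, hk, hdisj, hunion, hconn, hapex⟩ :=
    main_prune T r hT s hs (Finset.univ.card) Finset.univ le_rfl (Finset.mem_univ r)
      (fun w _ v _ => Finset.mem_univ v)
  refine ⟨k, B, ?_, hdisj, by simpa using hunion, hconn, hapex⟩
  rw [Finset.card_univ] at hk
  have h1 : (k - 1) * s ≤ Fintype.card V := le_of_lt hk
  have h2 : k - 1 ≤ Fintype.card V / s := (Nat.le_div_iff_mul_le (by omega)).mpr h1
  omega
end
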